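/- arXiv:1701.07458 — 5 statements merged into one kernel-verified Lean document; each statement's English description precedes it below -/
import Mathlib

section
/- Let B = (b_{ij}) and C = (c_{ij}) be two n×n multiparameter quantum matrices over R (for the same parameters p, q), such that every entry of B commutes with every entry of C. Let A = BC be their matrix product, a_{ij} = Σ_k b_{ik}c_{kj}. Then rdet(A) = rdet(B)·rdet(C) and cdet(A) = cdet(B)·cdet(C). -/
open Finset

noncomputable section

attribute [local instance] Classical.propDecidable

/-- Ordered product `f 0 * f 1 * ... * f (n-1)` of noncommuting elements. -/
def ordProd {R : Type*} [Monoid R] {n : ℕ} (f : Fin n → R) : R :=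
  (List.ofFn f).prod

/-- The generalized sign `(−q)_σ` with column labels `cols`:
`(−1)^{ℓ(σ)} ∏_{k<k', σ(k)>σ(k')} q_{cols(σ(k')) cols(σ(k))}`. -/
def qSign {N t : ℕ} (q : Fin N → Fin N → ℂ) (cols : Fin t → Fin N)
    (σ : Equiv.Perm (Fin t)) : ℂ :=
  ∏ ij ∈ Finset.univ.filter
      (fun ij : Fin t × Fin t => ij.1 < ij.2 ∧ σ ij.2 < σ ij.1),
    (-(q (cols (σ ij.2)) (cols (σ ij.1))))

/-- The quantum minor `det_q(A^{rows}_{cols})`. -/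
def qMinor {R : Type*} [Ring R] [Algebra ℂ R] {N t : ℕ}
    (q : Fin N → Fin N → ℂ) (rows cols : Fin t → Fin N)
    (a : Fin N → Fin N → R) : R :=
  ∑ σ : Equiv.Perm (Fin t),
    qSign q cols σ • ordProd (fun k => a (rows k) (cols (σ k)))

/-- Quantum row determinant `rdet(A) = Σ_σ (−q)_σ a_{1σ(1)} ⋯ a_{nσ(n)}`. -/
def rdet {R : Type*} [Ring R] [Algebra ℂ R] {N : ℕ}
    (q : Fin N → Fin N → ℂ) (a : Fin N → Fin N → R) : R :=
  ∑ σ : Equiv.Perm (Fin N),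
    qSign q id σ • ordProd (fun i => a i (σ i))

/-- Quantum column determinant `cdet(A) = Σ_σ (−p)_σ a_{σ(1)1} ⋯ a_{σ(n)n}`. -/
def cdet {R : Type*} [Ring R] [Algebra ℂ R] {N : ℕ}
    (p : Fin N → Fin N → ℂ) (a : Fin N → Fin N → R) : R :=
  ∑ σ : Equiv.Perm (Fin N),
    qSign p id σ • ordProd (fun i => a (σ i) i)

/-- Conditions on the parameters: they are nonzero, `p_{ii} = q_{ii} = 1`,
and `p_{ij}p_{ji} = q_{ij}q_{ji} = 1`. -/
def ParamConds {N : ℕ} (p q : Fin N → Fin N → ℂ) : Prop :=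
  (∀ i j, p i j ≠ 0 ∧ q i j ≠ 0) ∧
  (∀ i, p i i = 1 ∧ q i i = 1) ∧
  (∀ i j, p i j * p j i = 1 ∧ q i j * q j i = 1)

/-- The `(p,λ)`-condition: `p_{ij} q_{ij} = λ` for `i < j`. -/
def PLambdaCond {N : ℕ} (p q : Fin N → Fin N → ℂ) (lam : ℂ) : Prop :=
  ∀ i j : Fin N, i < j → p i j * q i j = lam

/-- `A = (a_{ij})` is a multiparameter quantum matrix for the parameters `p, q`. -/
def IsQuantumMatrix {R : Type*} [Ring R] [Algebra ℂ R] {N : ℕ}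
    (p q : Fin N → Fin N → ℂ) (a : Fin N → Fin N → R) : Prop :=
  (∀ i k l : Fin N, k < l → a i k * a i l = q k l • (a i l * a i k)) ∧
  (∀ i j k : Fin N, i < j → a i k * a j k = p i j • (a j k * a i k)) ∧
  (∀ i j k l : Fin N, i < j → k < l →
    a i k * a j l - (q k l / q i j) • (a j l * a i k)
      = q k l • (a i l * a j k) - (q i j)⁻¹ • (a j k * a i l)) ∧
  (∀ i j k l : Fin N, i < j → k < l →
    a i k * a j l - (p i j / p k l) • (a j l * a i k)
      = p i j • (a j k * a i l) - (p k l)⁻¹ • (a i l * a j k))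

/-- `x_1, …, x_n` satisfy the `q`-exterior relations. -/
def QExterior {R : Type*} [Ring R] [Algebra ℂ R] {N : ℕ}
    (q : Fin N → Fin N → ℂ) (x : Fin N → R) : Prop :=
  (∀ i, x i * x i = 0) ∧
  (∀ i j : Fin N, i < j → x j * x i = -(q i j) • (x i * x j))

/-- The quantum integer `[k]_λ = 1 + λ + ⋯ + λ^{k−1}`. -/
def qNum (lam : ℂ) (k : ℕ) : ℂ := ∑ i ∈ Finset.range k, lam ^ i

/-- The quantum factorial `[n]_λ! = [1]_λ [2]_λ ⋯ [n]_λ`. -/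
def qFact (lam : ℂ) (n : ℕ) : ℂ := ∏ k ∈ Finset.range n, qNum lam (k + 1)

/-- The index `2i−1` (1-based), i.e. position `2i` (0-based), inside `Fin (2n)`. -/
def pfIdx1 {n : ℕ} (i : Fin n) : Fin (2 * n) :=
  ⟨2 * i.1, by have := i.isLt; omega⟩

/-- The index `2i` (1-based), i.e. position `2i+1` (0-based), inside `Fin (2n)`. -/
def pfIdx2 {n : ℕ} (i : Fin n) : Fin (2 * n) :=
  ⟨2 * i.1 + 1, by have := i.isLt; omega⟩

/-- The multiparameter quantum Pfaffian
`Pf_q(B) = Σ_σ (−q)_σ b_{σ(1)σ(2)} ⋯ b_{σ(2n−1)σ(2n)}`, the sum over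
permutations `σ` of `{1,…,2n}` with `σ(2i−1) < σ(2i)` for all `i`. -/
def Pf {R : Type*} [Ring R] [Algebra ℂ R] {n : ℕ}
    (q : Fin (2 * n) → Fin (2 * n) → ℂ) (b : Fin (2 * n) → Fin (2 * n) → R) : R :=
  ∑ σ ∈ Finset.univ.filter
      (fun σ : Equiv.Perm (Fin (2 * n)) => ∀ i : Fin n, σ (pfIdx1 i) < σ (pfIdx2 i)),
    qSign q id σ • ordProd (fun i : Fin n => b (σ (pfIdx1 i)) (σ (pfIdx2 i)))

/-- Sub-Pfaffian along an index map `f` (typically the increasing enumeration of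
a subset of the indices): the parameters and the entries are restricted along `f`. -/
def PfOn {R : Type*} [Ring R] [Algebra ℂ R] {N m : ℕ}
    (q : Fin N → Fin N → ℂ) (b : Fin N → Fin N → R) (f : Fin (2 * m) → Fin N) : R :=
  Pf (fun i j => q (f i) (f j)) (fun i j => b (f i) (f j))

/-- `inv(I, J) = ∏_{i ∈ I, j ∈ J, i > j} (−q_{ji})`. -/
def invQ {N : ℕ} (q : Fin N → Fin N → ℂ) (I J : Finset (Fin N)) : ℂ :=
  ∏ i ∈ I, ∏ j ∈ J, if j < i then -(q j i) else 1

/-- The position `k·m + r` within `Fin (m·n)`, i.e. the `r`-th index of the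
`k`-th block of size `m`. -/
def blockIdx {m n : ℕ} (k : Fin n) (r : Fin m) : Fin (m * n) :=
  ⟨k.1 * m + r.1, by
    have hk : k.1 + 1 ≤ n := k.isLt
    have hr : r.1 < m := r.isLt
    calc k.1 * m + r.1 < k.1 * m + m := Nat.add_lt_add_left hr _
      _ = (k.1 + 1) * m := (Nat.succ_mul k.1 m).symm
      _ ≤ n * m := Nat.mul_le_mul hk (le_refl m)
      _ = m * n := Nat.mul_comm n m⟩

/-- The multiparameter quantum hyper-Pfaffian
`Pf_q(B) = Σ_{σ∈Π} (−q)_σ b_{σ(1)…σ(m)} ⋯ b_{σ(m(n−1)+1)…σ(mn)}`, where `Π` is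
the set of permutations of `{1,…,mn}` increasing on each consecutive block of
length `m`. -/
def hPf {R : Type*} [Ring R] [Algebra ℂ R] {m n : ℕ}
    (q : Fin (m * n) → Fin (m * n) → ℂ) (b : (Fin m → Fin (m * n)) → R) : R :=
  ∑ σ ∈ Finset.univ.filter
      (fun σ : Equiv.Perm (Fin (m * n)) =>
        ∀ k : Fin n, StrictMono (fun r : Fin m => σ (blockIdx k r))),
    qSign q id σ • ordProd (fun k : Fin n => b (fun r => σ (blockIdx k r)))

/-- The increasing enumeration of `{1,…,n} \ {k}` (the "hat" of `k`). -/
def hatIdx {n : ℕ} (k : Fin n) (r : Fin (n - 1)) : Fin n :=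
  if h : r.1 < k.1 then ⟨r.1, by have := k.isLt; omega⟩
  else ⟨r.1 + 1, by have := r.isLt; omega⟩

/-- The increasing enumeration of `{s+1,…,n}`. -/
def tailIdx {n : ℕ} (s : ℕ) (k : Fin (n - s)) : Fin n :=
  ⟨s + k.1, by have := k.isLt; omega⟩

/-- The increasing enumeration of `{1,…,t}` inside `{1,…,n}`. -/
def headIdx {n : ℕ} (t : ℕ) (ht : t ≤ n) (k : Fin t) : Fin n :=
  ⟨k.1, lt_of_lt_of_le k.isLt ht⟩

/-- `σ` is a `t`-shuffle: `σ(1) < ⋯ < σ(t)` and `σ(t+1) < ⋯ < σ(n)`. -/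
def IsShuffle {n : ℕ} (t : ℕ) (σ : Equiv.Perm (Fin n)) : Prop :=
  (∀ k l : Fin n, k < l → l.1 < t → σ k < σ l) ∧
  (∀ k l : Fin n, k < l → t ≤ k.1 → σ k < σ l)
namespace RQaux

/-! ### Ordered product lemmas -/

section Monoid
variable {R : Type*} [Monoid R]

lemma ordProd_zero (f : Fin 0 → R) : ordProd f = 1 := by simp [ordProd]

lemma ordProd_succ {n : ℕ} (f : Fin (n + 1) → R) :
    ordProd f = f 0 * ordProd (fun i : Fin n => f i.succ) := by
  simp [ordProd, List.ofFn_succ]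

lemma ordProd_mul_of_commute {n : ℕ} (x y : Fin n → R)
    (h : ∀ i j, Commute (y i) (x j)) :
    ordProd (fun i => x i * y i) = ordProd x * ordProd y := by
  induction n with
  | zero => simp [ordProd_zero]
  | succ n ih =>
      rw [ordProd_succ, ordProd_succ x, ordProd_succ y,
        ih (fun i => x i.succ) (fun i => y i.succ) (fun i j => h i.succ j.succ)]
      have hc : Commute (y 0) (ordProd (fun i : Fin n => x i.succ)) := by
        apply Commute.list_prod_right
        intro z hz
        rw [List.mem_ofFn] at hz
        obtain ⟨i, hi⟩ := hz
        exact hi ▸ h 0 i.succ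
      calc x 0 * y 0 * (ordProd (fun i : Fin n => x i.succ) * ordProd (fun i : Fin n => y i.succ))
          = x 0 * (y 0 * ordProd (fun i : Fin n => x i.succ)) * ordProd (fun i : Fin n => y i.succ) := by
            simp [mul_assoc]
        _ = x 0 * (ordProd (fun i : Fin n => x i.succ) * y 0) * ordProd (fun i : Fin n => y i.succ) := by
            rw [hc.eq]
        _ = _ := by simp [mul_assoc]

lemma ofFn_decomp {α : Type*} {n : ℕ} (f : Fin n → α) (t : ℕ) (h : t + 1 < n) :
    List.ofFn f =
      (List.ofFn fun i : Fin t => f ⟨i.1, by omega⟩) ++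
        f ⟨t, by omega⟩ :: f ⟨t + 1, h⟩ ::
          List.ofFn (fun i : Fin (n - (t + 2)) => f ⟨t + 2 + i.1, by omega⟩) := by
  apply List.ext_getElem
  · simp; omega
  intro i h1 h2
  simp only [List.length_ofFn] at h1
  rcases lt_trichotomy i t with hi | hi | hi
  · rw [List.getElem_append_left (by simp [hi])]
    simp
  · subst hi
    rw [List.getElem_append_right (by simp)]
    simp
  · rw [List.getElem_append_right (by simp; omega)]
    simp only [List.length_ofFn, List.getElem_ofFn, List.getElem_cons]
    split_ifs with h0 h01
    · omega
    · congr 1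
      exact Fin.ext (by simp; omega)
    · congr 1
      exact Fin.ext (by simp; omega)

def preP {n : ℕ} (f : Fin n → R) (t : ℕ) (h : t + 1 < n) : R :=
  (List.ofFn fun i : Fin t => f ⟨i.1, by omega⟩).prod

def postP {n : ℕ} (f : Fin n → R) (t : ℕ) (h : t + 1 < n) : R :=
  (List.ofFn fun i : Fin (n - (t + 2)) => f ⟨t + 2 + i.1, by omega⟩).prod

lemma ordProd_decomp {n : ℕ} (f : Fin n → R) (t : ℕ) (h : t + 1 < n) :
    ordProd f = preP f t h * (f ⟨t, by omega⟩ * (f ⟨t + 1, h⟩ * postP f t h)) := by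
  rw [ordProd, ofFn_decomp f t h, List.prod_append, List.prod_cons, List.prod_cons]
  rfl

lemma preP_congr {n : ℕ} (f g : Fin n → R) (t : ℕ) (h : t + 1 < n)
    (hfg : ∀ i : Fin n, i.1 ≠ t → i.1 ≠ t + 1 → f i = g i) :
    preP f t h = preP g t h := by
  unfold preP
  exact congrArg List.prod (congrArg List.ofFn
    (funext fun i => hfg _ (by have := i.isLt; simp; omega) (by have := i.isLt; simp; omega)))

lemma postP_congr {n : ℕ} (f g : Fin n → R) (t : ℕ) (h : t + 1 < n)
    (hfg : ∀ i : Fin n, i.1 ≠ t → i.1 ≠ t + 1 → f i = g i) :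
    postP f t h = postP g t h := by
  unfold postP
  exact congrArg List.prod (congrArg List.ofFn
    (funext fun i => hfg _ (by have := i.isLt; simp; omega) (by have := i.isLt; simp; omega)))

end Monoid

section RingSec
variable {R : Type*} [Ring R] [Algebra ℂ R]

lemma ordProd_sum {N : ℕ} : ∀ {n : ℕ} (g : Fin n → Fin N → R),
    ordProd (fun i => ∑ k, g i k) = ∑ f : Fin n → Fin N, ordProd (fun i => g i (f i)) := by
  intro n
  induction n with
  | zero =>
      intro g
      rw [Fintype.sum_unique]
      simp [ordProd_zero]
  | succ n ih =>
      intro g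
      have e1 : (∑ f : Fin (n + 1) → Fin N, ordProd fun i => g i (f i)) =
          ∑ kf : Fin N × (Fin n → Fin N), ordProd fun i => g i (Fin.cons (α := fun _ : Fin (n + 1) => Fin N) kf.1 kf.2 i) := by
        apply Fintype.sum_equiv (Fin.consEquiv (fun _ : Fin (n + 1) => Fin N)).symm
        intro f
        congr 1
        funext i
        exact congrArg (g i) (congrFun (Fin.cons_self_tail (α := fun _ : Fin (n + 1) => Fin N) f) i).symm
      rw [e1, Fintype.sum_prod_type, ordProd_succ, ih (fun i k => g i.succ k),
        Finset.sum_mul_sum]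
      refine Finset.sum_congr rfl fun k _ => Finset.sum_congr rfl fun f _ => ?_
      rw [ordProd_succ]
      simp

lemma pair_identity {n : ℕ} (f g : Fin n → R) (t : ℕ) (h : t + 1 < n)
    (hfg : ∀ i : Fin n, i.1 ≠ t → i.1 ≠ t + 1 → f i = g i) (α β : ℂ) :
    α • ordProd f + β • ordProd g =
      preP f t h *
        ((α • (f ⟨t, by omega⟩ * f ⟨t + 1, h⟩) + β • (g ⟨t, by omega⟩ * g ⟨t + 1, h⟩)) *
          postP f t h) := by
  rw [ordProd_decomp f t h, ordProd_decomp g t h,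
    preP_congr g f t h (fun i h1 h2 => (hfg i h1 h2).symm),
    postP_congr g f t h (fun i h1 h2 => (hfg i h1 h2).symm)]
  simp only [add_mul, mul_add, smul_mul_assoc, mul_smul_comm, mul_assoc]

lemma pair_zero {n : ℕ} (f g : Fin n → R) (t : ℕ) (h : t + 1 < n)
    (hfg : ∀ i : Fin n, i.1 ≠ t → i.1 ≠ t + 1 → f i = g i) (α β : ℂ)
    (hmid : α • (f ⟨t, by omega⟩ * f ⟨t + 1, h⟩) + β • (g ⟨t, by omega⟩ * g ⟨t + 1, h⟩) = 0) :
    α • ordProd f + β • ordProd g = 0 := by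
  rw [pair_identity f g t h hfg α β, hmid, zero_mul, mul_zero]

lemma pair_eq {n : ℕ} (f g f' g' : Fin n → R) (t : ℕ) (h : t + 1 < n)
    (hfg : ∀ i : Fin n, i.1 ≠ t → i.1 ≠ t + 1 → f i = g i)
    (hff' : ∀ i : Fin n, i.1 ≠ t → i.1 ≠ t + 1 → f i = f' i)
    (hfg' : ∀ i : Fin n, i.1 ≠ t → i.1 ≠ t + 1 → f i = g' i)
    (α β α' β' : ℂ) (c : ℂ)
    (hmid : α • (f ⟨t, by omega⟩ * f ⟨t + 1, h⟩) + β • (g ⟨t, by omega⟩ * g ⟨t + 1, h⟩) =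
      c • (α' • (f' ⟨t, by omega⟩ * f' ⟨t + 1, h⟩) + β' • (g' ⟨t, by omega⟩ * g' ⟨t + 1, h⟩))) :
    α • ordProd f + β • ordProd g = c • (α' • ordProd f' + β' • ordProd g') := by
  rw [pair_identity f g t h hfg α β,
    pair_identity f' g' t h (fun i h1 h2 => by rw [← hff' i h1 h2, hfg' i h1 h2]) α' β',
    ← preP_congr f f' t h hff', ← postP_congr f f' t h hff', hmid]
  simp only [smul_mul_assoc, mul_smul_comm]

end RingSec

/-! ### Inversions and generalized signs -/

def invSet {N n : ℕ} (w : Fin n → Fin N) : Finset (Fin n × Fin n) :=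
  Finset.univ.filter fun ij => ij.1 < ij.2 ∧ w ij.2 < w ij.1

def qsgn {N n : ℕ} (u : Fin N → Fin N → ℂ) (w : Fin n → Fin N) : ℂ :=
  ∏ ij ∈ invSet w, (-(u (w ij.2) (w ij.1)))

lemma qSign_eq {N : ℕ} (q : Fin N → Fin N → ℂ) (σ : Equiv.Perm (Fin N)) :
    qSign q id σ = qsgn q ⇑σ := rfl

lemma invSet_id {n : ℕ} : invSet (fun i : Fin n => i) = ∅ := by
  ext ij
  simp only [invSet, Finset.mem_filter, Finset.mem_univ, true_and, Finset.notMem_empty,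
    iff_false]
  rintro ⟨h1, h2⟩
  exact absurd h1 (not_lt.mpr h2.le)

lemma qsgn_id {n N : ℕ} (u : Fin N → Fin N → ℂ) (w : Fin n → Fin N) (hw : StrictMono w) :
    qsgn u w = 1 := by
  unfold qsgn
  rw [Finset.prod_eq_one]
  intro ij hij
  exfalso
  simp only [invSet, Finset.mem_filter] at hij
  exact absurd (hw hij.2.1) (not_lt.mpr hij.2.2.le)

section Swap
variable {n : ℕ} (t : ℕ) (h : t + 1 < n)

def t0 : Fin n := ⟨t, by omega⟩
def t1 : Fin n := ⟨t + 1, h⟩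

lemma t0_lt_t1 : t0 t h < t1 t h := by simp [t0, t1, Fin.lt_def]

lemma t0_ne_t1 : t0 t h ≠ t1 t h := by simp [t0, t1, Fin.ext_iff]

def swp : Equiv.Perm (Fin n) := Equiv.swap (t0 t h) (t1 t h)

lemma swp_t0 : swp t h (t0 t h) = t1 t h := Equiv.swap_apply_left _ _
lemma swp_t1 : swp t h (t1 t h) = t0 t h := Equiv.swap_apply_right _ _

lemma swp_apply_of_ne {i : Fin n} (h1 : i.1 ≠ t) (h2 : i.1 ≠ t + 1) :
    swp t h i = i :=
  Equiv.swap_apply_of_ne_of_ne (fun e => h1 (congrArg Fin.val e))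
    (fun e => h2 (congrArg Fin.val e))

lemma swp_swp (i : Fin n) : swp t h (swp t h i) = i := Equiv.swap_apply_self _ _ _

lemma swp_val (x : Fin n) :
    (swp t h x).1 = if x.1 = t then t + 1 else if x.1 = t + 1 then t else x.1 := by
  rcases eq_or_ne x (t0 t h) with e | e
  · subst e; rw [swp_t0]; simp only [t0, t1]; split_ifs <;> omega
  · rcases eq_or_ne x (t1 t h) with e2 | e2
    · subst e2; rw [swp_t1]
      simp only [t0, t1]
      split_ifs <;> omega
    · have hv1 : x.1 ≠ t := fun hv => e (Fin.ext hv)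
      have hv2 : x.1 ≠ t + 1 := fun hv => e2 (Fin.ext hv)
      rw [swp_apply_of_ne t h hv1 hv2, if_neg hv1, if_neg hv2]

lemma swp_lt {i j : Fin n} (hij : i < j) (hne : ¬(i = t0 t h ∧ j = t1 t h)) :
    swp t h i < swp t h j := by
  have hne' : ¬(i.1 = t ∧ j.1 = t + 1) := by
    rintro ⟨e1, e2⟩; exact hne ⟨Fin.ext e1, Fin.ext e2⟩
  have hlt : i.1 < j.1 := hij
  have hi := i.isLt
  have hj := j.isLt
  rw [Fin.lt_def, swp_val, swp_val]
  split_ifs <;> omega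

lemma invSet_swap {N : ℕ} (w : Fin n → Fin N) (hw : w (t0 t h) < w (t1 t h)) :
    invSet (w ∘ swp t h) =
      insert (t0 t h, t1 t h)
        ((invSet w).image fun ij => (swp t h ij.1, swp t h ij.2)) := by
  ext ⟨i, j⟩
  simp only [invSet, Finset.mem_insert, Finset.mem_image, Finset.mem_filter, Finset.mem_univ,
    true_and, Function.comp_apply, Prod.mk.injEq, Prod.exists]
  constructor
  · rintro ⟨hij, hwji⟩
    by_cases hc : i = t0 t h ∧ j = t1 t h
    · exact Or.inl hc
    · refine Or.inr ⟨swp t h i, swp t h j, ⟨swp_lt t h hij hc, hwji⟩, ?_, ?_⟩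
      · rw [swp_swp]
      · rw [swp_swp]
  · rintro (⟨hi, hj⟩ | ⟨i', j', ⟨hij', hw'⟩, hi, hj⟩)
    · subst hi; subst hj
      refine ⟨t0_lt_t1 t h, ?_⟩
      simpa [swp_t0, swp_t1] using hw
    · subst hi; subst hj
      have hne : ¬(i' = t0 t h ∧ j' = t1 t h) := by
        rintro ⟨e1, e2⟩
        subst e1; subst e2
        exact absurd hw (not_lt.mpr hw'.le)
      refine ⟨swp_lt t h hij' hne, ?_⟩
      simpa [swp_swp] using hw'

lemma pair_not_mem {N : ℕ} (w : Fin n → Fin N) :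
    (t0 t h, t1 t h) ∉ (invSet w).image fun ij => (swp t h ij.1, swp t h ij.2) := by
  intro hmem
  obtain ⟨⟨i, j⟩, hij, he⟩ := Finset.mem_image.mp hmem
  simp only [Prod.mk.injEq] at he
  have hi : i = t1 t h := by
    have := congrArg (swp t h) he.1; rwa [swp_swp, swp_t0] at this
  have hj : j = t0 t h := by
    have := congrArg (swp t h) he.2; rwa [swp_swp, swp_t1] at this
  simp only [invSet, Finset.mem_filter] at hij
  rw [hi, hj] at hij
  exact absurd (hij.2.1.trans (t0_lt_t1 t h)) (lt_irrefl _)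

lemma swp_pair_injective :
    Function.Injective (fun ij : Fin n × Fin n => (swp t h ij.1, swp t h ij.2)) := by
  rintro ⟨a, b⟩ ⟨c, d⟩ he
  simp only [Prod.mk.injEq] at he
  exact Prod.ext ((swp t h).injective he.1) ((swp t h).injective he.2)

lemma qsgn_swap {N : ℕ} (u : Fin N → Fin N → ℂ) (w : Fin n → Fin N)
    (hw : w (t0 t h) < w (t1 t h)) :
    qsgn u (w ∘ swp t h) = (-(u (w (t0 t h)) (w (t1 t h)))) * qsgn u w := by
  unfold qsgn
  rw [invSet_swap t h w hw, Finset.prod_insert (pair_not_mem t h w),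
    Finset.prod_image (fun x _ y _ he => swp_pair_injective t h he)]
  congr 1
  · simp [swp_t0, swp_t1]
  · exact Finset.prod_congr rfl fun ij _ => by simp [swp_swp]

lemma ninv_swap {N : ℕ} (w : Fin n → Fin N) (hw : w (t0 t h) < w (t1 t h)) :
    (invSet (w ∘ swp t h)).card = (invSet w).card + 1 := by
  rw [invSet_swap t h w hw, Finset.card_insert_of_notMem (pair_not_mem t h w),
    Finset.card_image_of_injective _ (swp_pair_injective t h)]

end Swap

/-! ### Strict monotonicity helpers -/

lemma strictMono_of_adj {N n : ℕ} (w : Fin n → Fin N)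
    (hadj : ∀ t (ht : t + 1 < n), w ⟨t, by omega⟩ < w ⟨t + 1, ht⟩) :
    StrictMono w := by
  have key : ∀ d : ℕ, ∀ i j : Fin n, j.1 = i.1 + d + 1 → w i < w j := by
    intro d
    induction d with
    | zero =>
        intro i j hj
        have ht : i.1 + 1 < n := by have := j.isLt; omega
        have := hadj i.1 ht
        have e1 : (⟨i.1, by omega⟩ : Fin n) = i := Fin.ext rfl
        have e2 : (⟨i.1 + 1, ht⟩ : Fin n) = j := Fin.ext (by simp; omega)
        rwa [e1, e2] at this
    | succ d ih =>
        intro i j hj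
        have hb : i.1 + d + 1 < n := by have := j.isLt; omega
        have h1 := ih i ⟨i.1 + d + 1, hb⟩ rfl
        have h2 : w ⟨i.1 + d + 1, hb⟩ < w j := by
          have ht : (i.1 + d + 1) + 1 < n := by have := j.isLt; omega
          have := hadj (i.1 + d + 1) ht
          have e2 : (⟨i.1 + d + 1 + 1, ht⟩ : Fin n) = j := Fin.ext (by simp; omega)
          rwa [e2] at this
        exact h1.trans h2
  intro i j hij
  exact key (j.1 - i.1 - 1) i j (by have := Fin.lt_def.mp hij; omega)

lemma strictMono_fin_id {n : ℕ} (w : Fin n → Fin n) (hw : StrictMono w) :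
    w = id := by
  funext i
  haveI : WellFoundedLT (Fin n) := inferInstance
  haveI : WellFoundedGT (Fin n) := inferInstance
  exact le_antisymm (StrictMono.apply_le (β := Fin n) hw) (StrictMono.le_apply (β := Fin n) hw)

end RQaux
namespace RQaux

section GG
variable {R : Type*} [Ring R] [Algebra ℂ R] {n : ℕ}

/-- The auxiliary sum `G(m, f) = Σ_σ qsgn(σ) • Π_i m (f i) (σ i)`. -/
def Gfun (u : Fin n → Fin n → ℂ) (m : Fin n → Fin n → R) (f : Fin n → Fin n) : R :=
  ∑ σ : Equiv.Perm (Fin n), qsgn u ⇑σ • ordProd (fun i => m (f i) (σ i))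

variable {u : Fin n → Fin n → ℂ} {m : Fin n → Fin n → R}

lemma coe_mul_swp (σ : Equiv.Perm (Fin n)) (t : ℕ) (h : t + 1 < n) :
    ⇑(σ * swp t h) = ⇑σ ∘ ⇑(swp t h) := rfl

lemma mul_swp_apply (σ : Equiv.Perm (Fin n)) (t : ℕ) (h : t + 1 < n) (i : Fin n) :
    (σ * swp t h) i = σ (swp t h i) := rfl

lemma mul_swp_swp (σ : Equiv.Perm (Fin n)) (t : ℕ) (h : t + 1 < n) :
    (σ * swp t h) * swp t h = σ := by
  rw [mul_assoc]
  unfold swp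
  rw [Equiv.swap_mul_self, mul_one]

lemma sum_perm_mul_swp (t : ℕ) (h : t + 1 < n) (F : Equiv.Perm (Fin n) → R) :
    ∑ σ : Equiv.Perm (Fin n), F (σ * swp t h) = ∑ σ : Equiv.Perm (Fin n), F σ :=
  Equiv.sum_comp (Equiv.mulRight (swp t h)) F

lemma two_smul_sum_pair (t : ℕ) (h : t + 1 < n) (F : Equiv.Perm (Fin n) → R) :
    (2 : ℂ) • ∑ σ : Equiv.Perm (Fin n), F σ =
      ∑ σ : Equiv.Perm (Fin n), (F σ + F (σ * swp t h)) := by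
  rw [Finset.sum_add_distrib, sum_perm_mul_swp t h F, two_smul]

/-- Core pairwise computation, degenerate case. -/
lemma pair_term_zero (H1 : ∀ x k l : Fin n, k < l → m x k * m x l = u k l • (m x l * m x k))
    (f : Fin n → Fin n) (t : ℕ) (h : t + 1 < n) (hf : f (t0 t h) = f (t1 t h))
    (σ : Equiv.Perm (Fin n)) (hσ : σ (t0 t h) < σ (t1 t h)) :
    qsgn u ⇑σ • ordProd (fun i => m (f i) (σ i)) +
      qsgn u ⇑(σ * swp t h) • ordProd (fun i => m (f i) ((σ * swp t h) i)) = 0 := by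
  have hsgn : qsgn u ⇑(σ * swp t h) = (-(u (σ (t0 t h)) (σ (t1 t h)))) * qsgn u ⇑σ := by
    rw [coe_mul_swp]
    exact qsgn_swap t h u ⇑σ hσ
  rw [hsgn]
  apply pair_zero _ _ t h
  · intro i h1 h2
    rw [mul_swp_apply, swp_apply_of_ne t h h1 h2]
  · have e0 : (⟨t, by omega⟩ : Fin n) = t0 t h := rfl
    have e1 : (⟨t + 1, h⟩ : Fin n) = t1 t h := rfl
    rw [e0, e1, mul_swp_apply, mul_swp_apply, swp_t0, swp_t1, hf]
    rw [H1 (f (t1 t h)) (σ (t0 t h)) (σ (t1 t h)) hσ]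
    set A := m (f (t1 t h)) (σ (t1 t h)) * m (f (t1 t h)) (σ (t0 t h))
    module

/-- Core pairwise computation, swap case. -/
lemma pair_term_swap
    (H2 : ∀ x y k l : Fin n, x < y → k < l →
      m y k * m x l - u k l • (m y l * m x k) =
        (-(u x y)) • (m x k * m y l - u k l • (m x l * m y k)))
    (f : Fin n → Fin n) (t : ℕ) (h : t + 1 < n) (hf : f (t0 t h) < f (t1 t h))
    (σ : Equiv.Perm (Fin n)) (hσ : σ (t0 t h) < σ (t1 t h)) :
    qsgn u ⇑σ • ordProd (fun i => m (f (swp t h i)) (σ i)) +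
      qsgn u ⇑(σ * swp t h) • ordProd (fun i => m (f (swp t h i)) ((σ * swp t h) i)) =
    (-(u (f (t0 t h)) (f (t1 t h)))) •
      (qsgn u ⇑σ • ordProd (fun i => m (f i) (σ i)) +
        qsgn u ⇑(σ * swp t h) • ordProd (fun i => m (f i) ((σ * swp t h) i))) := by
  have hsgn : qsgn u ⇑(σ * swp t h) = (-(u (σ (t0 t h)) (σ (t1 t h)))) * qsgn u ⇑σ := by
    rw [coe_mul_swp]
    exact qsgn_swap t h u ⇑σ hσ
  rw [hsgn]
  apply pair_eq _ _ _ _ t h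
  · intro i h1 h2
    rw [mul_swp_apply, swp_apply_of_ne t h h1 h2]
  · intro i h1 h2
    rw [swp_apply_of_ne t h h1 h2]
  · intro i h1 h2
    rw [swp_apply_of_ne t h h1 h2, mul_swp_apply, swp_apply_of_ne t h h1 h2]
  · have e0 : (⟨t, by omega⟩ : Fin n) = t0 t h := rfl
    have e1 : (⟨t + 1, h⟩ : Fin n) = t1 t h := rfl
    rw [e0, e1]
    simp only [mul_swp_apply, swp_t0, swp_t1]
    set x := f (t0 t h)
    set y := f (t1 t h)
    set k := σ (t0 t h)
    set l := σ (t1 t h)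
    have key := H2 x y k l hf hσ
    set α := qsgn u ⇑σ
    calc α • (m y k * m x l) + (-u k l * α) • (m y l * m x k)
        = α • (m y k * m x l - u k l • (m y l * m x k)) := by module
      _ = α • ((-(u x y)) • (m x k * m y l - u k l • (m x l * m y k))) := by rw [key]
      _ = (-(u x y)) • (α • (m x k * m y l) + (-u k l * α) • (m x l * m y k)) := by module

lemma smul_cancel_two {X Y : R} (h : (2 : ℂ) • X = (2 : ℂ) • Y) : X = Y := by
  have := congrArg (fun z : R => ((2 : ℂ)⁻¹) • z) h
  simpa [inv_smul_smul₀ (two_ne_zero (α := ℂ))] using this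

lemma Gfun_adj_eq (H1 : ∀ x k l : Fin n, k < l → m x k * m x l = u k l • (m x l * m x k))
    (f : Fin n → Fin n) (t : ℕ) (h : t + 1 < n) (hf : f (t0 t h) = f (t1 t h)) :
    Gfun u m f = 0 := by
  apply smul_cancel_two (Y := (0 : R))
  rw [smul_zero, Gfun, two_smul_sum_pair t h]
  apply Finset.sum_eq_zero
  intro σ _
  rcases lt_trichotomy (σ (t0 t h)) (σ (t1 t h)) with hσ | hσ | hσ
  · exact pair_term_zero H1 f t h hf σ hσ
  · exact absurd (σ.injective hσ) (t0_ne_t1 t h)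
  · have := pair_term_zero H1 f t h hf (σ * swp t h)
      (by rwa [mul_swp_apply, mul_swp_apply, swp_t0, swp_t1])
    rw [mul_swp_swp] at this
    rw [add_comm]
    exact this

lemma Gfun_adj_swap
    (H2 : ∀ x y k l : Fin n, x < y → k < l →
      m y k * m x l - u k l • (m y l * m x k) =
        (-(u x y)) • (m x k * m y l - u k l • (m x l * m y k)))
    (f : Fin n → Fin n) (t : ℕ) (h : t + 1 < n) (hf : f (t0 t h) < f (t1 t h)) :
    Gfun u m (f ∘ swp t h) = (-(u (f (t0 t h)) (f (t1 t h)))) • Gfun u m f := by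
  apply smul_cancel_two
  unfold Gfun
  rw [two_smul_sum_pair t h, Finset.smul_sum,
    two_smul_sum_pair t h (fun σ => (-(u (f (t0 t h)) (f (t1 t h)))) •
      (qsgn u ⇑σ • ordProd (fun i => m (f i) (σ i))))]
  refine Finset.sum_congr rfl fun σ _ => ?_
  rw [← smul_add]
  have hcomp : ∀ τ : Equiv.Perm (Fin n),
      (fun i => m ((f ∘ swp t h) i) (τ i)) = fun i => m (f (swp t h i)) (τ i) := fun τ => rfl
  rw [hcomp σ, hcomp (σ * swp t h)]
  rcases lt_trichotomy (σ (t0 t h)) (σ (t1 t h)) with hσ | hσ | hσ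
  · exact pair_term_swap H2 f t h hf σ hσ
  · exact absurd (σ.injective hσ) (t0_ne_t1 t h)
  · have := pair_term_swap H2 f t h hf (σ * swp t h)
      (by rwa [mul_swp_apply, mul_swp_apply, swp_t0, swp_t1])
    rw [mul_swp_swp] at this
    linear_combination (norm := module) this

end GG
end RQaux
namespace RQaux

section GE
variable {R : Type*} [Ring R] [Algebra ℂ R] {n : ℕ}
variable {u : Fin n → Fin n → ℂ} {m : Fin n → Fin n → R}

lemma Gfun_eval (H1 : ∀ x k l : Fin n, k < l → m x k * m x l = u k l • (m x l * m x k))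
    (H2 : ∀ x y k l : Fin n, x < y → k < l →
      m y k * m x l - u k l • (m y l * m x k) =
        (-(u x y)) • (m x k * m y l - u k l • (m x l * m y k)))
    (f : Fin n → Fin n) :
    Gfun u m f = if Function.Injective f then qsgn u f • Gfun u m id else 0 := by
  suffices key : ∀ N : ℕ, ∀ f : Fin n → Fin n, (invSet f).card = N →
      Gfun u m f = if Function.Injective f then qsgn u f • Gfun u m id else 0 from
    key (invSet f).card f rfl
  intro N
  induction N using Nat.strong_induction_on with
  | _ N ih =>
    intro f hN
    by_cases hdesc : ∃ t : ℕ, ∃ ht : t + 1 < n, f (t1 t ht) < f (t0 t ht)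
    · obtain ⟨t, ht, hlt⟩ := hdesc
      set f' : Fin n → Fin n := f ∘ ⇑(swp t ht) with hf'
      have hft0 : f' (t0 t ht) = f (t1 t ht) := by rw [hf']; simp [swp_t0]
      have hft1 : f' (t1 t ht) = f (t0 t ht) := by rw [hf']; simp [swp_t1]
      have hlt' : f' (t0 t ht) < f' (t1 t ht) := by rw [hft0, hft1]; exact hlt
      have hfs : f = f' ∘ ⇑(swp t ht) := by
        funext i
        rw [hf']
        simp [swp_swp]
      have hcard : (invSet f).card = (invSet f').card + 1 := by
        conv_lhs => rw [hfs]
        exact ninv_swap t ht f' hlt'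
      have hihf' := ih (invSet f').card (by omega) f' rfl
      have hGf : Gfun u m f = (-(u (f' (t0 t ht)) (f' (t1 t ht)))) • Gfun u m f' := by
        conv_lhs => rw [hfs]
        exact Gfun_adj_swap H2 f' t ht hlt'
      have hinj : Function.Injective f ↔ Function.Injective f' := by
        rw [hfs]
        exact (swp t ht).injective_comp f'
      have hsgn : qsgn u f = (-(u (f' (t0 t ht)) (f' (t1 t ht)))) * qsgn u f' := by
        conv_lhs => rw [hfs]
        exact qsgn_swap t ht u f' hlt'
      by_cases hI : Function.Injective f
      · rw [if_pos hI, hGf, hihf', if_pos (hinj.mp hI), hsgn, smul_smul]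
      · rw [if_neg hI, hGf, hihf', if_neg (fun hI' => hI (hinj.mpr hI')), smul_zero]
    · push_neg at hdesc
      by_cases heq : ∃ t : ℕ, ∃ ht : t + 1 < n, f (t0 t ht) = f (t1 t ht)
      · obtain ⟨t, ht, he⟩ := heq
        rw [Gfun_adj_eq H1 f t ht he, if_neg]
        intro hI
        exact absurd (hI he) (t0_ne_t1 t ht)
      · push_neg at heq
        have hmono : StrictMono f := by
          apply strictMono_of_adj
          intro t ht
          have h1 := hdesc t ht
          have h2 := heq t ht
          have e0 : (⟨t, by omega⟩ : Fin n) = t0 t ht := rfl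
          have e1 : (⟨t + 1, ht⟩ : Fin n) = t1 t ht := rfl
          rw [e0, e1]
          rcases lt_trichotomy (f (t0 t ht)) (f (t1 t ht)) with hc | hc | hc
          · exact hc
          · exact absurd hc h2
          · exact absurd hc (not_lt.mpr h1)
        have hid : f = id := strictMono_fin_id f hmono
        subst hid
        rw [if_pos Function.injective_id, qsgn_id u id strictMono_id, one_smul]

lemma sum_injective_eq_perm (F : (Fin n → Fin n) → R) :
    (∑ f : Fin n → Fin n, if Function.Injective f then F f else 0) =
      ∑ τ : Equiv.Perm (Fin n), F ⇑τ := by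
  rw [← Finset.sum_filter]
  symm
  apply Finset.sum_bij (fun (τ : Equiv.Perm (Fin n)) _ => ⇑τ)
  · intro τ _
    simp only [Finset.mem_filter, Finset.mem_univ, true_and]
    exact τ.injective
  · intro τ1 _ τ2 _ he
    exact Equiv.coe_fn_injective he
  · intro f hf
    simp only [Finset.mem_filter, Finset.mem_univ, true_and] at hf
    have hbij : Function.Bijective f := Finite.injective_iff_bijective.mp hf
    exact ⟨Equiv.ofBijective f hbij, Finset.mem_univ _, rfl⟩
  · intro τ _
    rfl

end GE
end RQaux

open RQaux

/-- The quantum determinants are multiplicative on products of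
quantum matrices with mutually commuting entries. -/
theorem rdet_cdet_mul {R : Type*} [Ring R] [Algebra ℂ R] {n : ℕ} (hn : 1 ≤ n)
    (p q : Fin n → Fin n → ℂ) (hpq : ParamConds p q)
    (b c : Fin n → Fin n → R)
    (hb : IsQuantumMatrix p q b) (hc : IsQuantumMatrix p q c)
    (hcomm : ∀ i j k l, Commute (b i j) (c k l))
    (a : Fin n → Fin n → R) (ha : ∀ i j, a i j = ∑ k, b i k * c k j) :
    rdet q a = rdet q b * rdet q c ∧ cdet p a = cdet p b * cdet p c := by
  constructor
  · -- row determinant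
    have H1 : ∀ x k l : Fin n, k < l → c x k * c x l = q k l • (c x l * c x k) :=
      fun x k l hkl => hc.1 x k l hkl
    have H2 : ∀ x y k l : Fin n, x < y → k < l →
        c y k * c x l - q k l • (c y l * c x k) =
          (-(q x y)) • (c x k * c y l - q k l • (c x l * c y k)) := by
      intro x y k l hxy hkl
      have key := hc.2.2.1 x y k l hxy hkl
      have hr : q x y ≠ 0 := (hpq.1 x y).2
      have key' : q x y • (c x k * c y l) - q k l • (c y l * c x k) =
          (q x y * q k l) • (c x l * c y k) - c y k * c x l := by
        have h0 := congrArg (fun z : R => q x y • z) key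
        simp only [smul_sub, smul_smul] at h0
        rw [show q x y * (q k l / q x y) = q k l by field_simp] at h0
        rw [show q x y * (q x y)⁻¹ = 1 by field_simp, one_smul] at h0
        exact h0
      linear_combination (norm := module) key'
    simp only [rdet]
    calc (∑ σ : Equiv.Perm (Fin n), qSign q id σ • ordProd fun i => a i (σ i))
        = ∑ σ : Equiv.Perm (Fin n), ∑ f : Fin n → Fin n,
            qsgn q ⇑σ • (ordProd (fun i => b i (f i)) * ordProd (fun i => c (f i) (σ i))) := by
          refine Finset.sum_congr rfl fun σ _ => ?_
          rw [qSign_eq]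
          have ha' : (fun i => a i (σ i)) = fun i => ∑ k, b i k * c k (σ i) :=
            funext fun i => ha i (σ i)
          rw [ha', ordProd_sum (fun i k => b i k * c k (σ i)), Finset.smul_sum]
          refine Finset.sum_congr rfl fun f _ => ?_
          rw [ordProd_mul_of_commute (fun i => b i (f i)) (fun i => c (f i) (σ i))
            (fun i j => (hcomm j (f j) (f i) (σ i)).symm)]
      _ = ∑ f : Fin n → Fin n, ordProd (fun i => b i (f i)) * Gfun q c f := by
          rw [Finset.sum_comm]
          refine Finset.sum_congr rfl fun f _ => ?_
          simp only [Gfun]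
          rw [Finset.mul_sum]
          exact Finset.sum_congr rfl fun σ _ => (mul_smul_comm _ _ _).symm
      _ = ∑ f : Fin n → Fin n, (if Function.Injective f then
            ordProd (fun i => b i (f i)) * (qsgn q f • Gfun q c id) else 0) := by
          refine Finset.sum_congr rfl fun f _ => ?_
          rw [Gfun_eval H1 H2 f]
          split_ifs with h
          · rfl
          · rw [mul_zero]
      _ = ∑ τ : Equiv.Perm (Fin n), ordProd (fun i => b i (τ i)) * (qsgn q ⇑τ • Gfun q c id) :=
          sum_injective_eq_perm _
      _ = (∑ τ : Equiv.Perm (Fin n), qsgn q ⇑τ • ordProd (fun i => b i (τ i))) * Gfun q c id := by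
          rw [Finset.sum_mul]
          exact Finset.sum_congr rfl fun τ _ => by rw [mul_smul_comm, smul_mul_assoc]
      _ = rdet q b * rdet q c := rfl
  · -- column determinant
    set m : Fin n → Fin n → R := fun i j => b j i with hm
    have H1 : ∀ x k l : Fin n, k < l → m x k * m x l = p k l • (m x l * m x k) :=
      fun x k l hkl => hb.2.1 k l x hkl
    have H2 : ∀ x y k l : Fin n, x < y → k < l →
        m y k * m x l - p k l • (m y l * m x k) =
          (-(p x y)) • (m x k * m y l - p k l • (m x l * m y k)) := by
      intro x y k l hxy hkl
      have key := hb.2.2.2 k l x y hkl hxy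
      have hr : p x y ≠ 0 := (hpq.1 x y).1
      have key' : p x y • (b k x * b l y) - p k l • (b l y * b k x) =
          (p x y * p k l) • (b l x * b k y) - b k y * b l x := by
        have h0 := congrArg (fun z : R => p x y • z) key
        simp only [smul_sub, smul_smul] at h0
        rw [show p x y * (p k l / p x y) = p k l by field_simp] at h0
        rw [show p x y * (p x y)⁻¹ = 1 by field_simp, one_smul] at h0
        exact h0
      simp only [hm]
      linear_combination (norm := module) key'
    simp only [cdet]
    calc (∑ σ : Equiv.Perm (Fin n), qSign p id σ • ordProd fun i => a (σ i) i)
        = ∑ σ : Equiv.Perm (Fin n), ∑ f : Fin n → Fin n,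
            qsgn p ⇑σ • (ordProd (fun i => b (σ i) (f i)) * ordProd (fun i => c (f i) i)) := by
          refine Finset.sum_congr rfl fun σ _ => ?_
          rw [qSign_eq]
          have ha' : (fun i => a (σ i) i) = fun i => ∑ k, b (σ i) k * c k i :=
            funext fun i => ha (σ i) i
          rw [ha', ordProd_sum (fun i k => b (σ i) k * c k i), Finset.smul_sum]
          refine Finset.sum_congr rfl fun f _ => ?_
          rw [ordProd_mul_of_commute (fun i => b (σ i) (f i)) (fun i => c (f i) i)
            (fun i j => (hcomm (σ j) (f j) (f i) i).symm)]
      _ = ∑ f : Fin n → Fin n, Gfun p m f * ordProd (fun i => c (f i) i) := by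
          rw [Finset.sum_comm]
          refine Finset.sum_congr rfl fun f _ => ?_
          simp only [Gfun, hm]
          rw [Finset.sum_mul]
          exact Finset.sum_congr rfl fun σ _ => (smul_mul_assoc _ _ _).symm
      _ = ∑ f : Fin n → Fin n, (if Function.Injective f then
            (qsgn p f • Gfun p m id) * ordProd (fun i => c (f i) i) else 0) := by
          refine Finset.sum_congr rfl fun f _ => ?_
          rw [Gfun_eval H1 H2 f]
          split_ifs with h
          · rfl
          · rw [zero_mul]
      _ = ∑ τ : Equiv.Perm (Fin n), (qsgn p ⇑τ • Gfun p m id) * ordProd (fun i => c (τ i) i) :=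
          sum_injective_eq_perm _
      _ = Gfun p m id * ∑ τ : Equiv.Perm (Fin n), qsgn p ⇑τ • ordProd (fun i => c (τ i) i) := by
          rw [Finset.mul_sum]
          exact Finset.sum_congr rfl fun τ _ => by rw [smul_mul_assoc, mul_smul_comm]
      _ = cdet p b * cdet p c := rfl
end
end

section
/- Let A = (a_{ij}) be an n×n multiparameter quantum matrix over R with the (p,λ)-condition, and let x_1,…,x_n ∈ R satisfy the q-exterior relations, with every a_{ij} commuting with every x_k. Set δ_i = Σ_{j=1}^n a_{ij} x_j. Then δ_i² = 0 for all i, and δ_j δ_i = −q_{ij} δ_i δ_j for all i < j; consequently, for every permutation σ of {1,…,n}, δ_{σ(1)} δ_{σ(2)} ⋯ δ_{σ(n)} = (−q)_σ · δ_1 δ_2 ⋯ δ_n. -/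
open Finset

noncomputable section

attribute [local instance] Classical.propDecidable

lemma ordProd_succ {R : Type*} [Monoid R] {n : ℕ} (f : Fin (n + 1) → R) :
    ordProd f = f 0 * ordProd (fun i => f i.succ) := by
  simp [ordProd, List.ofFn_succ]

lemma sum_antisym {R : Type*} [AddCommGroup R] {N : ℕ} (F : Fin N → Fin N → R)
    (hd : ∀ j, F j j = 0) (hs : ∀ j l, j < l → F j l + F l j = 0) :
    ∑ j : Fin N, ∑ l : Fin N, F j l = 0 := by
  rw [← Finset.sum_product']
  refine Finset.sum_ninvolution (fun p => (p.2, p.1)) ?_ ?_ (by simp) (by simp)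
  · intro p
    rcases lt_trichotomy p.1 p.2 with h | h | h
    · exact hs _ _ h
    · obtain ⟨j, l⟩ := p; cases h; simp [hd]
    · rw [add_comm]; exact hs _ _ h
  · intro p hF
    obtain ⟨j, l⟩ := p
    intro hc
    simp only [Prod.mk.injEq] at hc
    apply hF
    rw [hc.2]
    exact hd l

lemma ordProd_middle {R : Type*} [Ring R] [Algebra ℂ R] :
    ∀ (k : ℕ) {n : ℕ} (hk : k + 1 < n) (c : ℂ) (f g : Fin n → R),
      (∀ i : Fin n, i.1 ≠ k → i.1 ≠ k + 1 → f i = g i) →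
      f ⟨k, by omega⟩ * f ⟨k + 1, hk⟩ = c • (g ⟨k, by omega⟩ * g ⟨k + 1, hk⟩) →
      ordProd f = c • ordProd g := by
  intro k
  induction k with
  | zero =>
    intro n hk c f g hfg hswap
    obtain ⟨m, rfl⟩ : ∃ m, n = m + 2 := ⟨n - 2, by omega⟩
    rw [ordProd_succ, ordProd_succ, ordProd_succ, ordProd_succ]
    have hrest : (fun i : Fin m => f i.succ.succ) = fun i : Fin m => g i.succ.succ := by
      funext i
      exact hfg _ (by simp [Fin.ext_iff]) (by simp [Fin.ext_iff])
    have h0 : (0 : Fin (m + 2)) = ⟨0, by omega⟩ := rfl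
    have h1 : ((0 : Fin (m + 1)).succ : Fin (m + 2)) = ⟨1, hk⟩ := rfl
    rw [hrest, ← mul_assoc, ← mul_assoc, h0, h1, hswap, smul_mul_assoc]
  | succ k ih =>
    intro n hk c f g hfg hswap
    obtain ⟨m, rfl⟩ : ∃ m, n = m + 1 := ⟨n - 1, by omega⟩
    rw [ordProd_succ, ordProd_succ]
    have hk' : k + 1 < m := by omega
    have h0 : f 0 = g 0 := hfg 0 (by simp [Fin.ext_iff]) (by simp)
    rw [ih hk' c (fun i => f i.succ) (fun i => g i.succ)
      (fun i h1 h2 => hfg i.succ (by simpa [Fin.ext_iff] using fun h => h1 (by omega))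
        (by simp only [Fin.val_succ]; omega))
      (by
        have e1 : (⟨k, by omega⟩ : Fin m).succ = (⟨k + 1, by omega⟩ : Fin (m + 1)) := rfl
        have e2 : (⟨k + 1, hk'⟩ : Fin m).succ = (⟨k + 2, hk⟩ : Fin (m + 1)) := rfl
        simpa [e1, e2] using hswap),
      h0, mul_smul_comm]


section SwapLemmas
variable {N : ℕ} (k : ℕ) (hk : k + 1 < N)

lemma swap_lt (hk' : k < N) {i j : Fin N} (hij : i < j)
    (hne : ¬(i = (⟨k, hk'⟩ : Fin N) ∧ j = ⟨k + 1, hk⟩)) :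
    Equiv.swap (⟨k, hk'⟩ : Fin N) ⟨k + 1, hk⟩ i <
      Equiv.swap (⟨k, hk'⟩ : Fin N) ⟨k + 1, hk⟩ j := by
  rcases eq_or_ne i (⟨k, hk'⟩ : Fin N) with rfl | hi1
  · rcases eq_or_ne j ⟨k + 1, hk⟩ with rfl | hj2
    · exact absurd ⟨rfl, rfl⟩ hne
    · have hj1 : j ≠ (⟨k, hk'⟩ : Fin N) := ne_of_gt hij
      rw [Equiv.swap_apply_left, Equiv.swap_apply_of_ne_of_ne hj1 hj2]
      simp only [Fin.lt_def, ne_eq, Fin.ext_iff] at hij hj2 ⊢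
      omega
  · rcases eq_or_ne i ⟨k + 1, hk⟩ with rfl | hi2
    · have hj1 : j ≠ (⟨k, hk'⟩ : Fin N) := by
        intro h
        rw [h, Fin.lt_def] at hij
        simp at hij
      have hj2 : j ≠ (⟨k + 1, hk⟩ : Fin N) := ne_of_gt hij
      rw [Equiv.swap_apply_right, Equiv.swap_apply_of_ne_of_ne hj1 hj2]
      simp only [Fin.lt_def] at hij ⊢
      omega
    · rw [Equiv.swap_apply_of_ne_of_ne hi1 hi2]
      rcases eq_or_ne j (⟨k, hk'⟩ : Fin N) with rfl | hj1
      · rw [Equiv.swap_apply_left]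
        simp only [Fin.lt_def, ne_eq, Fin.ext_iff] at hij hi1 hi2 ⊢
        omega
      · rcases eq_or_ne j ⟨k + 1, hk⟩ with rfl | hj2
        · rw [Equiv.swap_apply_right]
          simp only [Fin.lt_def, ne_eq, Fin.ext_iff] at hij hi1 hi2 ⊢
          omega
        · rw [Equiv.swap_apply_of_ne_of_ne hj1 hj2]
          exact hij

lemma qSign_swap (q : Fin N → Fin N → ℂ) (σ : Equiv.Perm (Fin N))
    (h : σ ⟨k + 1, hk⟩ < σ ⟨k, by omega⟩) :
    qSign q id σ =
      (-(q (σ ⟨k + 1, hk⟩) (σ ⟨k, by omega⟩))) *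
        qSign q id (σ * Equiv.swap (⟨k, by omega⟩ : Fin N) ⟨k + 1, hk⟩) := by
  classical
  set k1 : Fin N := ⟨k, by omega⟩
  set k2 : Fin N := ⟨k + 1, hk⟩
  set s := Equiv.swap k1 k2 with hs
  set τ := σ * s with hτ
  have hk12 : k1 < k2 := by simp [k1, k2, Fin.lt_def]
  have hmem : (k1, k2) ∈ Finset.univ.filter
      (fun ij : Fin N × Fin N => ij.1 < ij.2 ∧ σ ij.2 < σ ij.1) := by
    simp [hk12, h]
  rw [qSign, ← Finset.mul_prod_erase _ _ hmem]
  congr 1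
  rw [qSign]
  refine (Finset.prod_nbij' (fun ij => (s ij.1, s ij.2)) (fun ij => (s ij.1, s ij.2))
    ?_ ?_ ?_ ?_ ?_).symm
  · rintro ⟨i, j⟩ hij
    simp only [Finset.mem_filter, Finset.mem_univ, true_and, Equiv.Perm.mul_apply, hτ] at hij
    obtain ⟨h1, h2⟩ := hij
    have hne : ¬(i = k1 ∧ j = k2) := by
      rintro ⟨rfl, rfl⟩
      rw [Equiv.swap_apply_left, Equiv.swap_apply_right] at h2
      exact absurd h2 (not_lt.2 (le_of_lt h))
    refine Finset.mem_erase.2 ⟨?_, ?_⟩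
    · intro hc
      simp only [Prod.mk.injEq] at hc
      have hi : i = k2 := by
        have := hc.1; rwa [← Equiv.swap_apply_right k1 k2, Equiv.injective s |>.eq_iff] at this
      have hj : j = k1 := by
        have := hc.2; rwa [← Equiv.swap_apply_left k1 k2, Equiv.injective s |>.eq_iff] at this
      rw [hi, hj] at h1
      exact absurd h1 (not_lt.2 (le_of_lt hk12))
    · simp only [Finset.mem_filter, Finset.mem_univ, true_and]
      exact ⟨swap_lt k hk (by omega) h1 hne, h2⟩
  · rintro ⟨i, j⟩ hij
    rw [Finset.mem_erase] at hij
    obtain ⟨hne0, hij⟩ := hij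
    simp only [Finset.mem_filter, Finset.mem_univ, true_and] at hij
    obtain ⟨h1, h2⟩ := hij
    have hne : ¬(i = k1 ∧ j = k2) := by
      rintro ⟨rfl, rfl⟩; exact hne0 rfl
    simp only [Finset.mem_filter, Finset.mem_univ, true_and, Equiv.Perm.mul_apply, hτ, hs,
      Equiv.swap_apply_self]
    exact ⟨swap_lt k hk (by omega) h1 hne, h2⟩
  · rintro ⟨i, j⟩ _; simp [Equiv.swap_apply_self, s]
  · rintro ⟨i, j⟩ _; simp [Equiv.swap_apply_self, s]
  · rintro ⟨i, j⟩ _; simp [hτ, Equiv.Perm.mul_apply]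

lemma card_swap (q : Fin N → Fin N → ℂ) (σ : Equiv.Perm (Fin N))
    (h : σ ⟨k + 1, hk⟩ < σ ⟨k, by omega⟩) :
    (Finset.univ.filter (fun ij : Fin N × Fin N => ij.1 < ij.2 ∧
        (σ * Equiv.swap (⟨k, by omega⟩ : Fin N) ⟨k + 1, hk⟩) ij.2 <
        (σ * Equiv.swap (⟨k, by omega⟩ : Fin N) ⟨k + 1, hk⟩) ij.1)).card <
      (Finset.univ.filter (fun ij : Fin N × Fin N => ij.1 < ij.2 ∧ σ ij.2 < σ ij.1)).card := by
  classical
  set k1 : Fin N := ⟨k, by omega⟩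
  set k2 : Fin N := ⟨k + 1, hk⟩
  set s := Equiv.swap k1 k2 with hs
  set τ := σ * s with hτ
  have hk12 : k1 < k2 := by simp [k1, k2, Fin.lt_def]
  have hmem : (k1, k2) ∈ Finset.univ.filter
      (fun ij : Fin N × Fin N => ij.1 < ij.2 ∧ σ ij.2 < σ ij.1) := by
    simp [hk12, h]
  have hcard : (Finset.univ.filter
        (fun ij : Fin N × Fin N => ij.1 < ij.2 ∧ τ ij.2 < τ ij.1)).card =
      ((Finset.univ.filter
        (fun ij : Fin N × Fin N => ij.1 < ij.2 ∧ σ ij.2 < σ ij.1)).erase (k1, k2)).card := by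
    refine Finset.card_nbij' (fun ij => (s ij.1, s ij.2)) (fun ij => (s ij.1, s ij.2))
      ?_ ?_ ?_ ?_
    · rintro ⟨i, j⟩ hij
      simp only [Finset.mem_coe, Finset.mem_filter, Finset.mem_univ, true_and, Equiv.Perm.mul_apply, hτ] at hij
      obtain ⟨h1, h2⟩ := hij
      have hne : ¬(i = k1 ∧ j = k2) := by
        rintro ⟨rfl, rfl⟩
        rw [Equiv.swap_apply_left, Equiv.swap_apply_right] at h2
        exact absurd h2 (not_lt.2 (le_of_lt h))
      refine Finset.mem_erase.2 ⟨?_, ?_⟩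
      · intro hc
        simp only [Prod.mk.injEq] at hc
        have hi : i = k2 := by
          have := hc.1; rwa [← Equiv.swap_apply_right k1 k2, Equiv.injective s |>.eq_iff] at this
        have hj : j = k1 := by
          have := hc.2; rwa [← Equiv.swap_apply_left k1 k2, Equiv.injective s |>.eq_iff] at this
        rw [hi, hj] at h1
        exact absurd h1 (not_lt.2 (le_of_lt hk12))
      · simp only [Finset.mem_filter, Finset.mem_univ, true_and]
        exact ⟨swap_lt k hk (by omega) h1 hne, h2⟩
    · rintro ⟨i, j⟩ hij
      rw [Finset.mem_coe, Finset.mem_erase] at hij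
      obtain ⟨hne0, hij⟩ := hij
      simp only [Finset.mem_filter, Finset.mem_univ, true_and] at hij
      obtain ⟨h1, h2⟩ := hij
      have hne : ¬(i = k1 ∧ j = k2) := by
        rintro ⟨rfl, rfl⟩; exact hne0 rfl
      simp only [Finset.mem_coe, Finset.mem_filter, Finset.mem_univ, true_and, Equiv.Perm.mul_apply, hτ, hs,
        Equiv.swap_apply_self]
      exact ⟨swap_lt k hk (by omega) h1 hne, h2⟩
    · rintro ⟨i, j⟩ _; simp [Equiv.swap_apply_self, s]
    · rintro ⟨i, j⟩ _; simp [Equiv.swap_apply_self, s]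
  rw [hcard]
  exact Finset.card_erase_lt_of_mem hmem

end SwapLemmas

lemma ordProd_perm {R : Type*} [Ring R] [Algebra ℂ R] {N : ℕ}
    (q : Fin N → Fin N → ℂ) (y : Fin N → R)
    (h2 : ∀ i j : Fin N, i < j → y j * y i = -(q i j) • (y i * y j)) :
    ∀ σ : Equiv.Perm (Fin N), ordProd (fun k => y (σ k)) = qSign q id σ • ordProd y := by
  classical
  suffices H : ∀ (m : ℕ) (σ : Equiv.Perm (Fin N)),
      (Finset.univ.filter (fun ij : Fin N × Fin N => ij.1 < ij.2 ∧ σ ij.2 < σ ij.1)).card = m →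
      ordProd (fun k => y (σ k)) = qSign q id σ • ordProd y by
    exact fun σ => H _ σ rfl
  intro m
  induction m using Nat.strong_induction_on with
  | _ m ih =>
    intro σ hm
    by_cases hmono : ∀ i j : Fin N, i < j → σ i < σ j
    · have hσ : σ = 1 := by
        have hsm : StrictMono σ := fun i j hij => hmono i j hij
        ext i
        have h := Fin.coe_orderIso_apply (StrictMono.orderIsoOfSurjective σ hsm σ.surjective) i
        rw [StrictMono.coe_orderIsoOfSurjective] at h
        simpa using h
      subst hσ
      have hempty : (Finset.univ.filter
          (fun ij : Fin N × Fin N => ij.1 < ij.2 ∧ (1 : Equiv.Perm (Fin N)) ij.2 <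
            (1 : Equiv.Perm (Fin N)) ij.1)) = ∅ := by
        apply Finset.filter_false_of_mem
        rintro ⟨i, j⟩ _ ⟨h1, hc⟩
        simp only [Equiv.Perm.one_apply] at hc
        exact absurd h1 (not_lt.2 (le_of_lt hc))
      rw [qSign, hempty]
      simp [Equiv.Perm.one_apply]
    · push_neg at hmono
      obtain ⟨i0, j0, hij0, hinv0⟩ := hmono
      -- there exists an adjacent inversion
      have hadj : ∃ (k : ℕ) (hk : k + 1 < N), σ ⟨k + 1, hk⟩ < σ ⟨k, by omega⟩ := by
        by_contra hno
        push_neg at hno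
        have hstep : ∀ (k : ℕ) (hk : k + 1 < N), σ ⟨k, by omega⟩ < σ ⟨k + 1, hk⟩ := by
          intro k hk
          rcases (hno k hk).lt_or_eq with h | h
          · exact h
          · have := σ.injective h
            simp [Fin.ext_iff] at this
        have hdist : ∀ (d : ℕ) (i j : Fin N), i < j → j.1 = i.1 + d + 1 → σ i < σ j := by
          intro d
          induction d with
          | zero =>
            intro i j hij hd1
            have hkN : i.1 + 1 < N := by have := j.isLt; omega
            have h := hstep i.1 hkN
            rw [Fin.eta] at h
            have hjm : j = ⟨i.1 + 1, hkN⟩ := by apply Fin.ext; simp; omega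
            rw [hjm]
            exact h
          | succ d ihd =>
            intro i j hij hd1
            have hj' : i.1 + d + 1 < N := by have := j.isLt; omega
            have h1 : σ i < σ ⟨i.1 + d + 1, hj'⟩ :=
              ihd i ⟨i.1 + d + 1, hj'⟩ (by rw [Fin.lt_def]; simp) (by simp)
            have hk2 : i.1 + d + 1 + 1 < N := by have := j.isLt; omega
            have h2' := hstep (i.1 + d + 1) hk2
            have hjm : j = ⟨i.1 + d + 1 + 1, hk2⟩ := by apply Fin.ext; simp; omega
            rw [hjm]
            exact h1.trans h2'
        exact absurd (hdist (j0.1 - i0.1 - 1) i0 j0 hij0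
          (by have := hij0; rw [Fin.lt_def] at this; omega)) (not_lt.2 hinv0)
      obtain ⟨k, hk, hkinv⟩ := hadj
      set k1 : Fin N := ⟨k, by omega⟩ with hk1
      set k2 : Fin N := ⟨k + 1, hk⟩ with hk2
      set s : Equiv.Perm (Fin N) := Equiv.swap k1 k2 with hs
      set τ : Equiv.Perm (Fin N) := σ * s with hτ
      set c : ℂ := -(q (σ k2) (σ k1)) with hc
      have hfg : ∀ i : Fin N, i.1 ≠ k → i.1 ≠ k + 1 → y (σ i) = y (τ i) := by
        intro i h1 h2
        have : s i = i := Equiv.swap_apply_of_ne_of_ne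
          (by simp [hk1, Fin.ext_iff]; exact h1) (by simp [hk2, Fin.ext_iff]; exact h2)
        rw [hτ, Equiv.Perm.mul_apply, this]
      have hswap : y (σ k1) * y (σ k2) = c • (y (τ k1) * y (τ k2)) := by
        have hτ1 : τ k1 = σ k2 := by
          rw [hτ, Equiv.Perm.mul_apply, hs, Equiv.swap_apply_left]
        have hτ2 : τ k2 = σ k1 := by
          rw [hτ, Equiv.Perm.mul_apply, hs, Equiv.swap_apply_right]
        rw [hτ1, hτ2, hc]
        exact h2 (σ k2) (σ k1) hkinv
      have step1 : ordProd (fun t => y (σ t)) = c • ordProd (fun t => y (τ t)) :=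
        ordProd_middle k hk c _ _ (fun i h1 h2 => hfg i h1 h2) hswap
      have hcard : (Finset.univ.filter
          (fun ij : Fin N × Fin N => ij.1 < ij.2 ∧ τ ij.2 < τ ij.1)).card < m := by
        rw [← hm]
        exact card_swap k hk q σ hkinv
      have ihτ := ih _ hcard τ rfl
      have qs := qSign_swap k hk q σ hkinv
      rw [step1, ihτ, smul_smul]
      congr 1
      rw [qs, hc, hτ, hs, hk1, hk2]

/-- The elements `δ_i = Σ_j a_{ij} x_j` satisfy the `q`-exterior
relations and consequently `δ_{σ(1)} ⋯ δ_{σ(n)} = (−q)_σ δ_1 ⋯ δ_n`. -/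
theorem delta_relations {R : Type*} [Ring R] [Algebra ℂ R] {n : ℕ} (lam : ℂ)
    (p q : Fin n → Fin n → ℂ) (hpq : ParamConds p q) (hpl : PLambdaCond p q lam)
    (a : Fin n → Fin n → R) (ha : IsQuantumMatrix p q a)
    (x : Fin n → R) (hx : QExterior q x)
    (hax : ∀ i j k, Commute (a i j) (x k))
    (δ : Fin n → R) (hδ : ∀ i, δ i = ∑ j, a i j * x j) :
    (∀ i, δ i * δ i = 0) ∧
    (∀ i j : Fin n, i < j → δ j * δ i = -(q i j) • (δ i * δ j)) ∧
    (∀ σ : Equiv.Perm (Fin n),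
      ordProd (fun k => δ (σ k)) = qSign q id σ • ordProd δ) := by
  have norm : ∀ u v k l : Fin n, (a u k * x k) * (a v l * x l) = (a u k * a v l) * (x k * x l) := by
    intro u v k l
    have h := (hax v l k).eq   -- a v l * x k = x k * a v l
    calc a u k * x k * (a v l * x l) = a u k * ((x k * a v l) * x l) := by
          rw [mul_assoc, mul_assoc]
      _ = a u k * ((a v l * x k) * x l) := by rw [h]
      _ = (a u k * a v l) * (x k * x l) := by simp only [mul_assoc]
  have part1 : ∀ i, δ i * δ i = 0 := by
    intro i
    rw [hδ i, Finset.sum_mul_sum]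
    have : ∀ j l : Fin n, (a i j * x j) * (a i l * x l) = (a i j * a i l) * (x j * x l) :=
      fun j l => norm i i j l
    calc ∑ j : Fin n, ∑ l : Fin n, (a i j * x j) * (a i l * x l)
        = ∑ j : Fin n, ∑ l : Fin n, (a i j * a i l) * (x j * x l) := by
          exact Finset.sum_congr rfl fun j _ => Finset.sum_congr rfl fun l _ => this j l
      _ = 0 := by
          apply sum_antisym
          · intro j; rw [hx.1 j, mul_zero]
          · intro j l hjl
            rw [ha.1 i j l hjl, hx.2 j l hjl, smul_mul_assoc, mul_smul_comm, neg_smul,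
              add_neg_cancel]
  have part2 : ∀ i j : Fin n, i < j → δ j * δ i = -(q i j) • (δ i * δ j) := by
    intro i j hij
    have hqij : q i j ≠ 0 := (hpq.1 i j).2
    have key : δ j * δ i + q i j • (δ i * δ j) = 0 := by
      rw [hδ i, hδ j, Finset.sum_mul_sum, Finset.sum_mul_sum, Finset.smul_sum]
      simp_rw [Finset.smul_sum]
      rw [← Finset.sum_add_distrib]
      simp_rw [← Finset.sum_add_distrib]
      calc ∑ k : Fin n, ∑ l : Fin n,
            ((a j k * x k) * (a i l * x l) + q i j • ((a i k * x k) * (a j l * x l)))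
          = ∑ k : Fin n, ∑ l : Fin n,
            ((a j k * a i l) * (x k * x l) + q i j • ((a i k * a j l) * (x k * x l))) := by
            exact Finset.sum_congr rfl fun k _ => Finset.sum_congr rfl fun l _ => by
              rw [norm, norm]
        _ = 0 := by
            apply sum_antisym
            · intro k; rw [hx.1 k, mul_zero, mul_zero, smul_zero, add_zero]
            · intro k l hkl
              have h3 := ha.2.2.1 i j k l hij hkl
              have e1 : q i j * (q k l / q i j) = q k l := by field_simp
              have e2 : q i j * (q i j)⁻¹ = 1 := mul_inv_cancel₀ hqij
              have h3' : q i j • (a i k * a j l) - q k l • (a j l * a i k)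
                  = (q i j * q k l) • (a i l * a j k) - a j k * a i l := by
                have hcong := congrArg (fun r => q i j • r) h3
                simp only [smul_sub, smul_smul, e1, e2, one_smul] at hcong
                exact hcong
              have hz : a j k * a i l + q i j • (a i k * a j l) - q k l • (a j l * a i k)
                  - (q i j * q k l) • (a i l * a j k) = 0 := by
                calc a j k * a i l + q i j • (a i k * a j l) - q k l • (a j l * a i k)
                      - (q i j * q k l) • (a i l * a j k)
                    = a j k * a i l + (q i j • (a i k * a j l) - q k l • (a j l * a i k))
                      - (q i j * q k l) • (a i l * a j k) := by abel
                  _ = a j k * a i l + ((q i j * q k l) • (a i l * a j k) - a j k * a i l)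
                      - (q i j * q k l) • (a i l * a j k) := by rw [h3']
                  _ = 0 := by abel
              have hzw := congrArg (fun r => r * (x k * x l)) hz
              simp only [add_mul, sub_mul, smul_mul_assoc, zero_mul] at hzw
              rw [hx.2 k l hkl]
              simp only [mul_smul_comm]
              simp only [smul_smul]
              simp only [mul_neg, neg_smul]
              abel_nf at hzw ⊢
              exact hzw
    have := eq_neg_of_add_eq_zero_left key
    rw [this, ← neg_smul]
  exact ⟨part1, part2, ordProd_perm q δ part2⟩
end
end

section
/- Let A = (a_{ij}) be an n×n multiparameter quantum matrix over R with the (p,λ)-condition. If the row indices i_1,…,i_t contain a repetition (i.e., i_s = i_{s'} for some s ≠ s') and 1 ≤ j_1 < ⋯ < j_t ≤ n, then the quantum minor vanishes: det_q(A^{i_1…i_t}_{j_1…j_t}) = 0. -/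
open Finset

noncomputable section

attribute [local instance] Classical.propDecidable

namespace QAux

lemma ordProd_split {R : Type*} [Monoid R] {t : ℕ} (f : Fin t → R)
    (s : ℕ) (hs : s + 1 < t) :
    ordProd f = ((List.ofFn f).take s).prod *
      (f ⟨s, by omega⟩ * (f ⟨s+1, hs⟩ * ((List.ofFn f).drop (s+2)).prod)) := by
  have hlen : (List.ofFn f).length = t := List.length_ofFn
  have h1 : s < (List.ofFn f).length := by omega
  have h2 : s + 1 < (List.ofFn f).length := by omega
  have e1 : (List.ofFn f).drop s = f ⟨s, by omega⟩ :: f ⟨s+1, hs⟩ ::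
      (List.ofFn f).drop (s+2) := by
    rw [List.drop_eq_getElem_cons h1, List.drop_eq_getElem_cons h2]
    simp [List.getElem_ofFn]
  calc ordProd f = ((List.ofFn f).take s).prod * ((List.ofFn f).drop s).prod := by
        rw [ordProd, List.prod_take_mul_prod_drop]
    _ = _ := by rw [e1, List.prod_cons, List.prod_cons]

lemma take_ofFn_congr {R : Type*} {t : ℕ} (f g : Fin t → R) (s : ℕ)
    (h : ∀ k : Fin t, k.1 < s → f k = g k) :
    (List.ofFn f).take s = (List.ofFn g).take s := by
  apply List.ext_getElem
  · simp
  · intro i h1 h2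
    have hi : i < t := by simp at h1; omega
    have his : i < s := by simp at h1; omega
    rw [List.getElem_take, List.getElem_take, List.getElem_ofFn, List.getElem_ofFn]
    exact h ⟨i, hi⟩ his

lemma drop_ofFn_congr {R : Type*} {t : ℕ} (f g : Fin t → R) (s : ℕ)
    (h : ∀ k : Fin t, s ≤ k.1 → f k = g k) :
    (List.ofFn f).drop s = (List.ofFn g).drop s := by
  apply List.ext_getElem
  · simp
  · intro i h1 h2
    have hi : s + i < t := by simp at h1 ⊢; omega
    simp only [List.getElem_drop, List.getElem_ofFn]
    exact h ⟨s + i, hi⟩ (Nat.le_add_right s i)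

lemma qSign_eq_prod_ite {N t : ℕ} (q : Fin N → Fin N → ℂ) (cols : Fin t → Fin N)
    (σ : Equiv.Perm (Fin t)) :
    qSign q cols σ = ∏ ij ∈ Finset.univ.filter
        (fun ij : Fin t × Fin t => ij.1 < ij.2),
      (if σ ij.2 < σ ij.1 then -(q (cols (σ ij.2)) (cols (σ ij.1))) else 1) := by
  rw [qSign, Finset.prod_filter, Finset.prod_filter]
  apply Finset.prod_congr rfl
  intro ij _
  by_cases h1 : ij.1 < ij.2 <;> by_cases h2 : σ ij.2 < σ ij.1 <;> simp [h1, h2]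


lemma swap_val {t : ℕ} (s s₁ : Fin t) (x : Fin t) :
    (Equiv.swap s s₁ x).1 =
      if x.1 = s.1 then s₁.1 else if x.1 = s₁.1 then s.1 else x.1 := by
  by_cases h1 : x = s
  · simp [h1]
  · by_cases h2 : x = s₁
    · subst h2
      rw [Equiv.swap_apply_right, if_neg (fun h => h1 (Fin.ext h)), if_pos rfl]
    · rw [Equiv.swap_apply_of_ne_of_ne h1 h2,
        if_neg (fun h => h1 (Fin.ext h)), if_neg (fun h => h2 (Fin.ext h))]

lemma swap_lt {t : ℕ} (s s₁ : Fin t) (hadj : s.1 + 1 = s₁.1)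
    {k k' : Fin t} (hkk : k < k') (hne : (k, k') ≠ (s, s₁)) :
    Equiv.swap s s₁ k < Equiv.swap s s₁ k' := by
  have hkv : k.1 < k'.1 := hkk
  have hnv : k.1 ≠ s.1 ∨ k'.1 ≠ s₁.1 := by
    by_contra hc
    push_neg at hc
    exact hne (by rw [Prod.ext_iff]; exact ⟨Fin.ext hc.1, Fin.ext hc.2⟩)
  rw [Fin.lt_def, swap_val, swap_val]
  split_ifs <;> omega

lemma qSign_mul_swap {N t : ℕ} (q : Fin N → Fin N → ℂ) (cols : Fin t → Fin N)
    (σ : Equiv.Perm (Fin t)) (s s₁ : Fin t) (hadj : s.1 + 1 = s₁.1)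
    (hlt : σ s < σ s₁) :
    qSign q cols (σ * Equiv.swap s s₁)
      = -(q (cols (σ s)) (cols (σ s₁))) * qSign q cols σ := by
  have hss : s < s₁ := Fin.lt_def.mpr (by omega)
  set T := Equiv.swap s s₁ with hT
  have hTs : T s = s₁ := Equiv.swap_apply_left s s₁
  have hTs1 : T s₁ = s := Equiv.swap_apply_right s s₁
  set P := Finset.univ.filter (fun ij : Fin t × Fin t => ij.1 < ij.2) with hP
  set φ : Fin t × Fin t → Fin t × Fin t :=
    fun ij => if ij = (s, s₁) then ij else (T ij.1, T ij.2) with hφ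
  have hTT : ∀ x, T (T x) = x := fun x => Equiv.swap_apply_self s s₁ x
  have hback : ∀ ij : Fin t × Fin t, (T ij.1, T ij.2) = (s, s₁) → ij = (s₁, s) := by
    intro ij hc
    have e1 : T ij.1 = s := congrArg Prod.fst hc
    have e2 : T ij.2 = s₁ := congrArg Prod.snd hc
    have f1 : ij.1 = s₁ := by have := congrArg T e1; rwa [hTT, hTs] at this
    have f2 : ij.2 = s := by have := congrArg T e2; rwa [hTT, hTs1] at this
    rw [← Prod.mk.eta (p := ij), f1, f2]
  have hφmem : ∀ ij ∈ P, φ ij ∈ P := by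
    intro ij hij
    rw [hP, Finset.mem_filter] at hij ⊢
    refine ⟨Finset.mem_univ _, ?_⟩
    simp only [hφ]
    by_cases h : ij = (s, s₁)
    · rw [if_pos h]; rw [h] at hij ⊢; exact hij.2
    · rw [if_neg h]
      exact swap_lt s s₁ hadj hij.2 (by rwa [Prod.mk.eta])
  have hφinv : ∀ ij ∈ P, φ (φ ij) = ij := by
    intro ij hij
    rw [hP, Finset.mem_filter] at hij
    simp only [hφ]
    by_cases h : ij = (s, s₁)
    · rw [if_pos h, if_pos h]
    · rw [if_neg h]
      have h2 : (T ij.1, T ij.2) ≠ (s, s₁) := by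
        intro hc
        have := hback ij hc
        rw [this] at hij
        exact absurd hij.2 (not_lt.mpr (le_of_lt hss))
      rw [if_neg h2]
      simp only [hTT, Prod.mk.eta]
  rw [qSign_eq_prod_ite, qSign_eq_prod_ite]
  have key : ∀ ij ∈ P,
      (if (σ * T) ij.2 < (σ * T) ij.1
        then -(q (cols ((σ * T) ij.2)) (cols ((σ * T) ij.1))) else 1)
      = ((if φ ij = (s, s₁) then -(q (cols (σ s)) (cols (σ s₁))) else 1) *
         (if σ (φ ij).2 < σ (φ ij).1
           then -(q (cols (σ (φ ij).2)) (cols (σ (φ ij).1))) else 1)) := by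
    intro ij hij
    rw [hP, Finset.mem_filter] at hij
    by_cases h : ij = (s, s₁)
    · have hφij : φ ij = (s, s₁) := by simp only [hφ]; rw [if_pos h, h]
      rw [hφij, if_pos rfl, h]
      simp only [Equiv.Perm.mul_apply, hTs, hTs1]
      rw [if_pos hlt, if_neg (not_lt.mpr (le_of_lt hlt))]
      ring
    · have hφij : φ ij = (T ij.1, T ij.2) := by simp only [hφ]; rw [if_neg h]
      have hφne : φ ij ≠ (s, s₁) := by
        rw [hφij]
        intro hc
        have := hback ij hc
        rw [this] at hij
        exact absurd hij.2 (not_lt.mpr (le_of_lt hss))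
      rw [if_neg hφne, hφij, one_mul]
      simp only [Equiv.Perm.mul_apply]
      exact if_congr Iff.rfl rfl rfl
  calc (∏ ij ∈ P, if (σ * T) ij.2 < (σ * T) ij.1
        then -(q (cols ((σ * T) ij.2)) (cols ((σ * T) ij.1))) else 1)
      = ∏ ij ∈ P, ((if φ ij = (s, s₁) then -(q (cols (σ s)) (cols (σ s₁))) else 1) *
         (if σ (φ ij).2 < σ (φ ij).1
           then -(q (cols (σ (φ ij).2)) (cols (σ (φ ij).1))) else 1)) :=
        Finset.prod_congr rfl key
    _ = ∏ ij ∈ P, ((if ij = (s, s₁) then -(q (cols (σ s)) (cols (σ s₁))) else 1) *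
         (if σ ij.2 < σ ij.1
           then -(q (cols (σ ij.2)) (cols (σ ij.1))) else 1)) := by
        apply Finset.prod_nbij' φ φ hφmem hφmem hφinv hφinv
        intro ij hij
        rfl
    _ = _ := by
        rw [Finset.prod_mul_distrib, Finset.prod_ite_eq']
        rw [if_pos (by rw [hP, Finset.mem_filter]; exact ⟨Finset.mem_univ _, hss⟩)]


lemma D_swap {R : Type*} [Ring R] [Algebra ℂ R] {N : ℕ}
    (p q : Fin N → Fin N → ℂ)
    (hq1 : ∀ i j, q i j * q j i = 1)
    (a : Fin N → Fin N → R) (ha : IsQuantumMatrix p q a)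
    {i j k l : Fin N} (hij : i ≠ j) (hkl : k < l) :
    a i k * a j l - q k l • (a i l * a j k)
      = (-(q j i)) • (a j k * a i l - q k l • (a j l * a i k)) := by
  have key : ∀ i j : Fin N, i < j →
      a i k * a j l - q k l • (a i l * a j k)
        = (-(q j i)) • (a j k * a i l - q k l • (a j l * a i k)) := by
    intro i j hlt
    have h := ha.2.2.1 i j k l hlt hkl
    have hQ : (q i j)⁻¹ = q j i := inv_eq_of_mul_eq_one_right (hq1 i j)
    rw [← hQ]
    rw [div_eq_mul_inv] at h
    linear_combination (norm := module) h
  rcases lt_or_gt_of_ne hij with h | h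
  · exact key i j h
  · have h2 := key j i h
    rw [h2, smul_smul, neg_mul_neg, hq1 j i, one_smul]

lemma pairSum {R : Type*} [Ring R] [Algebra ℂ R] {N t : ℕ}
    (q : Fin N → Fin N → ℂ) (col : Fin t → Fin N) (a : Fin N → Fin N → R)
    (ρ : Fin t → Fin N) (s s₁ : Fin t) (hadj : s.1 + 1 = s₁.1)
    (σ : Equiv.Perm (Fin t)) (hlt : σ s < σ s₁) :
    qSign q col σ • ordProd (fun k => a (ρ k) (col (σ k)))
      + qSign q col (σ * Equiv.swap s s₁) •
          ordProd (fun k => a (ρ k) (col ((σ * Equiv.swap s s₁) k)))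
    = qSign q col σ •
        (((List.ofFn (fun k => a (ρ k) (col (σ k)))).take s.1).prod *
         ((a (ρ s) (col (σ s)) * a (ρ s₁) (col (σ s₁))
            - q (col (σ s)) (col (σ s₁)) •
              (a (ρ s) (col (σ s₁)) * a (ρ s₁) (col (σ s)))) *
          ((List.ofFn (fun k => a (ρ k) (col (σ k)))).drop (s.1 + 2)).prod)) := by
  have hs : s.1 + 1 < t := by have := s₁.isLt; omega
  set T := Equiv.swap s s₁ with hT
  have hTs : T s = s₁ := Equiv.swap_apply_left s s₁
  have hTs1 : T s₁ = s := Equiv.swap_apply_right s s₁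
  have hTfix : ∀ k : Fin t, k ≠ s → k ≠ s₁ → T k = k := by
    intro k h1 h2; exact Equiv.swap_apply_of_ne_of_ne h1 h2
  set f : Fin t → R := fun k => a (ρ k) (col (σ k)) with hf
  set g : Fin t → R := fun k => a (ρ k) (col ((σ * T) k)) with hg
  set L := ((List.ofFn f).take s.1).prod with hL
  set Rt := ((List.ofFn f).drop (s.1 + 2)).prod with hRt
  have hfs : f ⟨s.1, by omega⟩ = f s := by congr 1
  have hfs1 : f ⟨s.1 + 1, hs⟩ = f s₁ := by congr 1; exact Fin.ext hadj
  have e1 : ordProd f = L * (f s * (f s₁ * Rt)) := by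
    rw [ordProd_split f s.1 hs, hfs, hfs1]
  have hgoff : ∀ k : Fin t, k ≠ s → k ≠ s₁ → g k = f k := by
    intro k h1 h2
    simp only [hg, hf, Equiv.Perm.mul_apply, hTfix k h1 h2]
  have hgs : g s = a (ρ s) (col (σ s₁)) := by
    simp only [hg, Equiv.Perm.mul_apply, hTs]
  have hgs1 : g s₁ = a (ρ s₁) (col (σ s)) := by
    simp only [hg, Equiv.Perm.mul_apply, hTs1]
  have hLg : ((List.ofFn g).take s.1).prod = L := by
    rw [hL]
    congr 1
    apply take_ofFn_congr
    intro k hk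
    exact hgoff k (fun h => by rw [h] at hk; omega)
      (fun h => by rw [h] at hk; omega)
  have hRg : ((List.ofFn g).drop (s.1 + 2)).prod = Rt := by
    rw [hRt]
    congr 1
    apply drop_ofFn_congr
    intro k hk
    exact hgoff k (fun h => by rw [h] at hk; omega)
      (fun h => by rw [h] at hk; omega)
  have e2 : ordProd g = L * (a (ρ s) (col (σ s₁)) * (a (ρ s₁) (col (σ s)) * Rt)) := by
    have hgs' : g ⟨s.1, by omega⟩ = g s := by congr 1
    have hgs1' : g ⟨s.1 + 1, hs⟩ = g s₁ := by congr 1; exact Fin.ext hadj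
    rw [ordProd_split g s.1 hs, hgs', hgs1', hgs, hgs1, hLg, hRg]
  have e3 : qSign q col (σ * T)
      = -(q (col (σ s)) (col (σ s₁))) * qSign q col σ :=
    qSign_mul_swap q col σ s s₁ hadj hlt
  rw [e1, e2, e3]
  simp only [hf]
  set e := qSign q col σ
  set qc := q (col (σ s)) (col (σ s₁))
  set x := a (ρ s) (col (σ s))
  set y := a (ρ s₁) (col (σ s₁))
  set x' := a (ρ s) (col (σ s₁))
  set y' := a (ρ s₁) (col (σ s))
  have h0 : (-qc * e) • (L * (x' * (y' * Rt))) = e • (-(qc • (L * (x' * (y' * Rt))))) := by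
    module
  rw [h0, ← smul_add]
  congr 1
  have h1 : qc • (L * (x' * (y' * Rt))) = L * ((qc • (x' * y')) * Rt) := by
    rw [smul_mul_assoc, mul_smul_comm, mul_assoc]
  rw [h1, sub_mul, mul_sub, mul_assoc x y Rt, ← sub_eq_add_neg]

lemma qMinor_adj_eq_zero {R : Type*} [Ring R] [Algebra ℂ R] {N t : ℕ}
    (p q : Fin N → Fin N → ℂ) (a : Fin N → Fin N → R)
    (ha : IsQuantumMatrix p q a)
    (row col : Fin t → Fin N) (hcol : StrictMono col)
    (s s₁ : Fin t) (hadj : s.1 + 1 = s₁.1) (heq : row s = row s₁) :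
    qMinor q row col a = 0 := by
  have hss : s ≠ s₁ := Fin.ne_of_val_ne (by omega)
  rw [qMinor]
  have key : ∀ τ : Equiv.Perm (Fin t), τ s < τ s₁ →
      qSign q col τ • ordProd (fun k => a (row k) (col (τ k)))
      + qSign q col (τ * Equiv.swap s s₁) •
          ordProd (fun k => a (row k) (col ((τ * Equiv.swap s s₁) k))) = 0 := by
    intro τ hlt
    rw [pairSum q col a row s s₁ hadj τ hlt]
    have hD : a (row s) (col (τ s)) * a (row s₁) (col (τ s₁))
        - q (col (τ s)) (col (τ s₁)) •
          (a (row s) (col (τ s₁)) * a (row s₁) (col (τ s))) = 0 := by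
      rw [← heq, ha.1 (row s) (col (τ s)) (col (τ s₁)) (hcol hlt), sub_self]
    rw [hD, zero_mul, mul_zero, smul_zero]
  apply Finset.sum_involution (fun σ _ => σ * Equiv.swap s s₁)
  · intro σ _
    rcases lt_or_gt_of_ne (fun h => hss (σ.injective h) : σ s ≠ σ s₁) with hlt | hgt
    · exact key σ hlt
    · have h2 := key (σ * Equiv.swap s s₁) (by
        simp only [Equiv.Perm.mul_apply, Equiv.swap_apply_left, Equiv.swap_apply_right]
        exact hgt)
      rw [mul_assoc, Equiv.swap_mul_self, mul_one] at h2
      rw [add_comm]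
      exact h2
  · intro σ _ _ hc
    have h3 := congrArg (fun τ : Equiv.Perm (Fin t) => τ s) hc
    simp only [Equiv.Perm.mul_apply, Equiv.swap_apply_left] at h3
    exact hss (σ.injective h3).symm
  · intro σ _; exact Finset.mem_univ _
  · intro σ _; rw [mul_assoc, Equiv.swap_mul_self, mul_one]

lemma qMinor_adj_swap {R : Type*} [Ring R] [Algebra ℂ R] {N t : ℕ}
    (p q : Fin N → Fin N → ℂ) (hq1 : ∀ i j, q i j * q j i = 1)
    (a : Fin N → Fin N → R) (ha : IsQuantumMatrix p q a)
    (row col : Fin t → Fin N) (hcol : StrictMono col)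
    (s s₁ : Fin t) (hadj : s.1 + 1 = s₁.1) (hne : row s ≠ row s₁) :
    qMinor q row col a = (-(q (row s₁) (row s))) •
      qMinor q (fun k => row (Equiv.swap s s₁ k)) col a := by
  have hss : s ≠ s₁ := Fin.ne_of_val_ne (by omega)
  set c := -(q (row s₁) (row s)) with hc
  rw [← sub_eq_zero, qMinor, qMinor, Finset.smul_sum, ← Finset.sum_sub_distrib]
  set ρ : Fin t → Fin N := fun k => row (Equiv.swap s s₁ k) with hρ
  have hρs : ρ s = row s₁ := by rw [hρ]; simp [Equiv.swap_apply_left]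
  have hρs1 : ρ s₁ = row s := by rw [hρ]; simp [Equiv.swap_apply_right]
  have key : ∀ τ : Equiv.Perm (Fin t), τ s < τ s₁ →
      (qSign q col τ • ordProd (fun k => a (row k) (col (τ k)))
        - c • (qSign q col τ • ordProd (fun k => a (ρ k) (col (τ k)))))
      + (qSign q col (τ * Equiv.swap s s₁) •
            ordProd (fun k => a (row k) (col ((τ * Equiv.swap s s₁) k)))
        - c • (qSign q col (τ * Equiv.swap s s₁) •
            ordProd (fun k => a (ρ k) (col ((τ * Equiv.swap s s₁) k))))) = 0 := by
    intro τ hlt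
    have e1 := pairSum q col a row s s₁ hadj τ hlt
    have e2 := pairSum q col a ρ s s₁ hadj τ hlt
    have hoff : ∀ k : Fin t, k.1 < s.1 ∨ s.1 + 2 ≤ k.1 →
        a (ρ k) (col (τ k)) = a (row k) (col (τ k)) := by
      intro k hk
      simp only [hρ]
      rw [Equiv.swap_apply_of_ne_of_ne
        (Fin.ne_of_val_ne (by omega)) (Fin.ne_of_val_ne (by omega))]
    have hLR : ((List.ofFn (fun k => a (ρ k) (col (τ k)))).take s.1).prod
        = ((List.ofFn (fun k => a (row k) (col (τ k)))).take s.1).prod := by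
      congr 1
      exact take_ofFn_congr _ _ _ (fun k hk => hoff k (Or.inl hk))
    have hRR : ((List.ofFn (fun k => a (ρ k) (col (τ k)))).drop (s.1 + 2)).prod
        = ((List.ofFn (fun k => a (row k) (col (τ k)))).drop (s.1 + 2)).prod := by
      congr 1
      exact drop_ofFn_congr _ _ _ (fun k hk => hoff k (Or.inr hk))
    have hD := D_swap p q hq1 a ha (i := row s) (j := row s₁)
      (k := col (τ s)) (l := col (τ s₁)) hne (hcol hlt)
    calc _ = (qSign q col τ • ordProd (fun k => a (row k) (col (τ k)))
          + qSign q col (τ * Equiv.swap s s₁) •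
            ordProd (fun k => a (row k) (col ((τ * Equiv.swap s s₁) k))))
        - c • (qSign q col τ • ordProd (fun k => a (ρ k) (col (τ k)))
          + qSign q col (τ * Equiv.swap s s₁) •
            ordProd (fun k => a (ρ k) (col ((τ * Equiv.swap s s₁) k)))) := by
          rw [smul_add]; abel
      _ = 0 := by
          rw [e1, e2, hLR, hRR, hρs, hρs1, hD, smul_mul_assoc, mul_smul_comm,
            smul_comm (qSign q col τ) c, sub_self]
  apply Finset.sum_involution (fun σ _ => σ * Equiv.swap s s₁)
  · intro σ _
    rcases lt_or_gt_of_ne (fun h => hss (σ.injective h) : σ s ≠ σ s₁) with hlt | hgt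
    · exact key σ hlt
    · have h2 := key (σ * Equiv.swap s s₁) (by
        simp only [Equiv.Perm.mul_apply, Equiv.swap_apply_left, Equiv.swap_apply_right]
        exact hgt)
      rw [mul_assoc, Equiv.swap_mul_self, mul_one] at h2
      rw [add_comm]
      exact h2
  · intro σ _ _ hc2
    have h3 := congrArg (fun τ : Equiv.Perm (Fin t) => τ s) hc2
    simp only [Equiv.Perm.mul_apply, Equiv.swap_apply_left] at h3
    exact hss (σ.injective h3).symm
  · intro σ _; exact Finset.mem_univ _
  · intro σ _; rw [mul_assoc, Equiv.swap_mul_self, mul_one]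

end QAux

/-- A quantum minor with a repeated row vanishes. -/
theorem qMinor_eq_zero_of_repeated_row {R : Type*} [Ring R] [Algebra ℂ R]
    {n : ℕ} (lam : ℂ)
    (p q : Fin n → Fin n → ℂ) (hpq : ParamConds p q) (hpl : PLambdaCond p q lam)
    (a : Fin n → Fin n → R) (ha : IsQuantumMatrix p q a)
    (t : ℕ) (row col : Fin t → Fin n) (hcol : StrictMono col)
    (hrow : ∃ s s' : Fin t, s ≠ s' ∧ row s = row s') :
    qMinor q row col a = 0 := by
  obtain ⟨s0, s0', hne0, heq0⟩ := hrow
  have hq1 : ∀ i j, q i j * q j i = 1 := fun i j => (hpq.2.2 i j).2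
  have main : ∀ d : ℕ, ∀ row : Fin t → Fin n, ∀ s s' : Fin t,
      s.1 + d + 1 = s'.1 → row s = row s' → qMinor q row col a = 0 := by
    intro d
    induction d with
    | zero =>
      intro row s s' h hEq
      exact QAux.qMinor_adj_eq_zero p q a ha row col hcol s s' (by omega) hEq
    | succ d ih =>
      intro row s s' h hEq
      set m : Fin t := ⟨s'.1 - 1, by have := s'.isLt; omega⟩ with hm
      have hmv : m.1 = s'.1 - 1 := rfl
      have hm1 : m.1 + 1 = s'.1 := by omega
      by_cases he : row m = row s'
      · exact QAux.qMinor_adj_eq_zero p q a ha row col hcol m s' hm1 he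
      · rw [QAux.qMinor_adj_swap p q hq1 a ha row col hcol m s' hm1 he]
        have hz : qMinor q (fun k => row (Equiv.swap m s' k)) col a = 0 := by
          apply ih (fun k => row (Equiv.swap m s' k)) s m (by omega)
          have h1 : Equiv.swap m s' s = s := Equiv.swap_apply_of_ne_of_ne
            (Fin.ne_of_val_ne (by omega)) (Fin.ne_of_val_ne (by omega))
          have h2 : Equiv.swap m s' m = s' := Equiv.swap_apply_left m s'
          show row (Equiv.swap m s' s) = row (Equiv.swap m s' m)
          rw [h1, h2]; exact hEq
        rw [hz, smul_zero]
  rcases lt_or_gt_of_ne hne0 with h | h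
  · exact main (s0'.1 - s0.1 - 1) row s0 s0' (by have hv : s0.1 < s0'.1 := h; omega) heq0
  · exact main (s0.1 - s0'.1 - 1) row s0' s0 (by have hv : s0'.1 < s0.1 := h; omega) heq0.symm
end
end

section
/- Let B = (b_{ij}) be any 2n×2n array of elements of R. Then for every 0 ≤ t ≤ n, Pf_q(B) = Σ_I inv(I, I^c) · Pf_q(B_I) · Pf_q(B_{I^c}), where the sum runs over all subsets I = {i_1 < ⋯ < i_{2t}} of {1,…,2n} of cardinality 2t and I^c is the complement of I. -/
open Finset

noncomputable section

attribute [local instance] Classical.propDecidable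

section LaplaceAux


lemma ordProd_split {R : Type*} [Monoid R] {a b n : ℕ} (h : a + b = n) (f : Fin n → R) :
    ordProd f = ordProd (fun i : Fin a => f ⟨i.1, by omega⟩) *
      ordProd (fun i : Fin b => f ⟨a + i.1, by omega⟩) := by
  unfold ordProd
  rw [← List.prod_append]
  congr 1
  apply List.ext_getElem
  · simp; omega
  · intro i h1 h2
    rw [List.getElem_ofFn, List.getElem_append]
    by_cases hlt : i < (List.ofFn fun i : Fin a => f ⟨i.1, by omega⟩).length
    · rw [dif_pos hlt, List.getElem_ofFn]
    · rw [dif_neg hlt, List.getElem_ofFn]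
      congr 1
      apply Fin.ext
      simp at hlt ⊢
      omega

lemma qSign_glue {N T S : ℕ} (hTS : T + S = N) (q : Fin N → Fin N → ℂ)
    (e₁ : Fin T → Fin N) (e₂ : Fin S → Fin N)
    (h₁ : StrictMono e₁) (h₂ : StrictMono e₂)
    (σ : Equiv.Perm (Fin N)) (σ₁ : Equiv.Perm (Fin T)) (σ₂ : Equiv.Perm (Fin S))
    (hh : ∀ (k : Fin N) (h : k.1 < T), σ k = e₁ (σ₁ ⟨k.1, h⟩))
    (ht : ∀ (k : Fin N) (h : ¬ k.1 < T) (h2 : k.1 - T < S), σ k = e₂ (σ₂ ⟨k.1 - T, h2⟩)) :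
    qSign q id σ =
      (∏ ab ∈ Finset.univ.filter (fun ab : Fin T × Fin S => e₂ ab.2 < e₁ ab.1),
        -(q (e₂ ab.2) (e₁ ab.1))) *
      (qSign (fun i j => q (e₁ i) (e₁ j)) id σ₁ *
       qSign (fun i j => q (e₂ i) (e₂ j)) id σ₂) := by
  unfold qSign
  simp only [id]
  rw [← Finset.prod_filter_mul_prod_filter_not
    (Finset.univ.filter (fun ij : Fin N × Fin N => ij.1 < ij.2 ∧ σ ij.2 < σ ij.1))
    (fun ij => ij.2.1 < T)]
  rw [← Finset.prod_filter_mul_prod_filter_not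
    ((Finset.univ.filter (fun ij : Fin N × Fin N => ij.1 < ij.2 ∧ σ ij.2 < σ ij.1)).filter
      (fun ij => ¬ ij.2.1 < T))
    (fun ij => ij.1.1 < T)]
  simp only [Finset.filter_filter]
  have hA : (∏ ij ∈ Finset.univ.filter
      (fun ij : Fin N × Fin N => (ij.1 < ij.2 ∧ σ ij.2 < σ ij.1) ∧ ij.2.1 < T),
        -(q (σ ij.2) (σ ij.1)))
      = ∏ ij ∈ Finset.univ.filter
          (fun ij : Fin T × Fin T => ij.1 < ij.2 ∧ σ₁ ij.2 < σ₁ ij.1),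
        -(q (e₁ (σ₁ ij.2)) (e₁ (σ₁ ij.1))) := by
    refine Finset.prod_bij'
      (fun ij hij => ((⟨ij.1.1, by
          have h' := (Finset.mem_filter.mp hij).2
          have h1 := h'.1.1; have h2 := h'.2; rw [Fin.lt_def] at h1; omega⟩ : Fin T),
        (⟨ij.2.1, (Finset.mem_filter.mp hij).2.2⟩ : Fin T)))
      (fun ab _ => ((⟨ab.1.1, by have := ab.1.2; omega⟩ : Fin N),
        (⟨ab.2.1, by have := ab.2.2; omega⟩ : Fin N)))
      ?hi ?hj ?li ?ri ?h
    case hi =>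
      intro ij hij
      have h' := (Finset.mem_filter.mp hij).2
      have h1 := h'.1.1
      have hlt : ij.1.1 < T := by rw [Fin.lt_def] at h1; have := h'.2; omega
      simp only [Finset.mem_filter, Finset.mem_univ, true_and]
      refine ⟨h1, ?_⟩
      have e2 : σ ij.2 = e₁ (σ₁ ⟨ij.2.1, h'.2⟩) := hh _ _
      have e1 : σ ij.1 = e₁ (σ₁ ⟨ij.1.1, hlt⟩) := hh _ _
      have := h'.1.2
      rw [e1, e2] at this
      exact h₁.lt_iff_lt.mp this
    case hj =>
      intro ab hab
      have h' := (Finset.mem_filter.mp hab).2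
      simp only [Finset.mem_filter, Finset.mem_univ, true_and]
      have hm1 : (⟨ab.1.1, by have := ab.1.2; omega⟩ : Fin N).1 < T := ab.1.2
      have hm2 : (⟨ab.2.1, by have := ab.2.2; omega⟩ : Fin N).1 < T := ab.2.2
      refine ⟨⟨h'.1, ?_⟩, ab.2.2⟩
      rw [hh _ hm1, hh _ hm2]
      simp only [Fin.eta]
      exact h₁.lt_iff_lt.mpr h'.2
    case li => intro ij hij; rfl
    case ri => intro ab hab; rfl
    case h =>
      intro ij hij
      have h' := (Finset.mem_filter.mp hij).2
      have h1 := h'.1.1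
      have hlt : ij.1.1 < T := by rw [Fin.lt_def] at h1; have := h'.2; omega
      simp only [hh ij.2 h'.2, hh ij.1 hlt]
  have hB : (∏ ij ∈ Finset.univ.filter
      (fun ij : Fin N × Fin N => ((ij.1 < ij.2 ∧ σ ij.2 < σ ij.1) ∧ ¬ ij.2.1 < T) ∧ ¬ ij.1.1 < T),
        -(q (σ ij.2) (σ ij.1)))
      = ∏ ij ∈ Finset.univ.filter
          (fun ij : Fin S × Fin S => ij.1 < ij.2 ∧ σ₂ ij.2 < σ₂ ij.1),
        -(q (e₂ (σ₂ ij.2)) (e₂ (σ₂ ij.1))) := by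
    refine Finset.prod_bij'
      (fun ij hij => ((⟨ij.1.1 - T, by
          have h' := (Finset.mem_filter.mp hij).2
          have := ij.1.2; have := h'.2; omega⟩ : Fin S),
        (⟨ij.2.1 - T, by
          have h' := (Finset.mem_filter.mp hij).2
          have := ij.2.2; have := h'.1.2; omega⟩ : Fin S)))
      (fun ab _ => ((⟨T + ab.1.1, by have := ab.1.2; omega⟩ : Fin N),
        (⟨T + ab.2.1, by have := ab.2.2; omega⟩ : Fin N)))
      ?hBiB ?hBjB ?liB ?riB ?hB
    case hBiB =>
      intro ij hij
      have h' := (Finset.mem_filter.mp hij).2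
      obtain ⟨⟨⟨hlt, hinv⟩, h2⟩, h1⟩ := h'
      simp only [Finset.mem_filter, Finset.mem_univ, true_and]
      constructor
      · rw [Fin.lt_def] at hlt ⊢; simp; omega
      · have e2 : σ ij.2 = e₂ (σ₂ ⟨ij.2.1 - T, by have := ij.2.2; omega⟩) := ht _ h2 _
        have e1 : σ ij.1 = e₂ (σ₂ ⟨ij.1.1 - T, by have := ij.1.2; omega⟩) := ht _ h1 _
        rw [e1, e2] at hinv
        exact h₂.lt_iff_lt.mp hinv
    case hBjB =>
      intro ab hab
      have h' := (Finset.mem_filter.mp hab).2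
      simp only [Finset.mem_filter, Finset.mem_univ, true_and]
      have hn1 : ¬ (⟨T + ab.1.1, by have := ab.1.2; omega⟩ : Fin N).1 < T := by simp
      have hn2 : ¬ (⟨T + ab.2.1, by have := ab.2.2; omega⟩ : Fin N).1 < T := by simp
      refine ⟨⟨⟨?_, ?_⟩, hn2⟩, hn1⟩
      · rw [Fin.lt_def] at h' ⊢; simp; omega
      · rw [ht _ hn1 (by simp), ht _ hn2 (by simp)]
        have r1 : (⟨(⟨T + ab.1.1, by have := ab.1.2; omega⟩ : Fin N).1 - T, by simp⟩ : Fin S) = ab.1 := by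
          apply Fin.ext; simp
        have r2 : (⟨(⟨T + ab.2.1, by have := ab.2.2; omega⟩ : Fin N).1 - T, by simp⟩ : Fin S) = ab.2 := by
          apply Fin.ext; simp
        rw [r1, r2]
        exact h₂.lt_iff_lt.mpr h'.2
    case liB =>
      intro ij hij
      have h' := (Finset.mem_filter.mp hij).2
      obtain ⟨⟨_, h2⟩, h1⟩ := h'
      refine Prod.ext ?_ ?_ <;> (apply Fin.ext; simp; omega)
    case riB =>
      intro ab hab
      refine Prod.ext ?_ ?_ <;> (apply Fin.ext; simp)
    case hB =>
      intro ij hij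
      have h' := (Finset.mem_filter.mp hij).2
      obtain ⟨⟨_, h2⟩, h1⟩ := h'
      simp only [ht ij.2 h2 (by have := ij.2.2; omega), ht ij.1 h1 (by have := ij.1.2; omega)]
  have hC : (∏ ij ∈ Finset.univ.filter
      (fun ij : Fin N × Fin N => ((ij.1 < ij.2 ∧ σ ij.2 < σ ij.1) ∧ ¬ ij.2.1 < T) ∧ ij.1.1 < T),
        -(q (σ ij.2) (σ ij.1)))
      = ∏ ab ∈ Finset.univ.filter (fun ab : Fin T × Fin S => e₂ ab.2 < e₁ ab.1),
        -(q (e₂ ab.2) (e₁ ab.1)) := by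
    refine Finset.prod_bij'
      (fun ij hij => ((σ₁ ⟨ij.1.1, (Finset.mem_filter.mp hij).2.2⟩ : Fin T),
        (σ₂ ⟨ij.2.1 - T, by
          have h' := (Finset.mem_filter.mp hij).2
          have := ij.2.2; have := h'.1.2; omega⟩ : Fin S)))
      (fun ab _ => ((⟨(σ₁⁻¹ ab.1).1, by have := (σ₁⁻¹ ab.1).2; omega⟩ : Fin N),
        (⟨T + (σ₂⁻¹ ab.2).1, by have := (σ₂⁻¹ ab.2).2; omega⟩ : Fin N)))
      ?hCiC ?hCjC ?liC ?riC ?hC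
    case hCiC =>
      intro ij hij
      have h' := (Finset.mem_filter.mp hij).2
      obtain ⟨⟨⟨hlt, hinv⟩, h2⟩, h1⟩ := h'
      simp only [Finset.mem_filter, Finset.mem_univ, true_and]
      rw [ht ij.2 h2 (by have := ij.2.2; omega), hh ij.1 h1] at hinv
      exact hinv
    case hCjC =>
      intro ab hab
      have h' := (Finset.mem_filter.mp hab).2
      simp only [Finset.mem_filter, Finset.mem_univ, true_and]
      have hm1 : (⟨(σ₁⁻¹ ab.1).1, by have := (σ₁⁻¹ ab.1).2; omega⟩ : Fin N).1 < T := (σ₁⁻¹ ab.1).2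
      have hn2 : ¬ (⟨T + (σ₂⁻¹ ab.2).1, by have := (σ₂⁻¹ ab.2).2; omega⟩ : Fin N).1 < T := by simp
      refine ⟨⟨⟨?_, ?_⟩, hn2⟩, hm1⟩
      · rw [Fin.lt_def]; simp; have := (σ₁⁻¹ ab.1).2; omega
      · rw [hh _ hm1, ht _ hn2 (by simp)]
        have r1 : (⟨(⟨(σ₁⁻¹ ab.1).1, by have := (σ₁⁻¹ ab.1).2; omega⟩ : Fin N).1, hm1⟩ : Fin T) = σ₁⁻¹ ab.1 := by
          apply Fin.ext; simp
        have r2 : (⟨(⟨T + (σ₂⁻¹ ab.2).1, by have := (σ₂⁻¹ ab.2).2; omega⟩ : Fin N).1 - T, by simp⟩ : Fin S) = σ₂⁻¹ ab.2 := by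
          apply Fin.ext; simp
        rw [r1, r2]
        simp only [Equiv.Perm.inv_def, Equiv.apply_symm_apply]
        exact h'
    case liC =>
      intro ij hij
      have h' := (Finset.mem_filter.mp hij).2
      obtain ⟨⟨_, h2⟩, h1⟩ := h'
      refine Prod.ext ?_ ?_ <;> apply Fin.ext
      · simp only [Equiv.Perm.inv_def, Equiv.symm_apply_apply]
      · simp only [Equiv.Perm.inv_def, Equiv.symm_apply_apply]
        omega
    case riC =>
      intro ab hab
      refine Prod.ext ?_ ?_
      · simp only []
        rw [show (⟨(⟨(σ₁⁻¹ ab.1).1, by have := (σ₁⁻¹ ab.1).2; omega⟩ : Fin N).1, by exact (σ₁⁻¹ ab.1).2⟩ : Fin T) = σ₁⁻¹ ab.1 from Fin.ext (by simp)]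
        exact Equiv.apply_symm_apply _ _
      · simp only []
        rw [show (⟨(⟨T + (σ₂⁻¹ ab.2).1, by have := (σ₂⁻¹ ab.2).2; omega⟩ : Fin N).1 - T, by simp⟩ : Fin S) = σ₂⁻¹ ab.2 from Fin.ext (by simp)]
        exact Equiv.apply_symm_apply _ _
    case hC =>
      intro ij hij
      have h' := (Finset.mem_filter.mp hij).2
      obtain ⟨⟨_, h2⟩, h1⟩ := h'
      simp only [ht ij.2 h2 (by have := ij.2.2; omega), hh ij.1 h1]
  rw [hA, hB, hC]
  ring

lemma invQ_eq {N T S : ℕ} (q : Fin N → Fin N → ℂ) (I : Finset (Fin N))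
    (hI : I.card = T) (hIc : Iᶜ.card = S) :
    invQ q I Iᶜ = ∏ ab ∈ Finset.univ.filter
        (fun ab : Fin T × Fin S =>
          (Iᶜ.orderIsoOfFin hIc ab.2 : Fin N) < (I.orderIsoOfFin hI ab.1 : Fin N)),
      -(q (Iᶜ.orderIsoOfFin hIc ab.2) (I.orderIsoOfFin hI ab.1)) := by
  unfold invQ
  rw [← Finset.prod_product']
  rw [Finset.prod_filter]
  refine Finset.prod_bij'
    (fun ij hij => (((I.orderIsoOfFin hI).symm ⟨ij.1, (Finset.mem_product.mp hij).1⟩ : Fin T),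
      ((Iᶜ.orderIsoOfFin hIc).symm ⟨ij.2, (Finset.mem_product.mp hij).2⟩ : Fin S)))
    (fun ab _ => ((I.orderIsoOfFin hI ab.1 : Fin N), (Iᶜ.orderIsoOfFin hIc ab.2 : Fin N)))
    ?hi ?hj ?li ?ri ?h
  case hi => intro ij hij; simp
  case hj =>
    intro ab _
    simp only [Finset.mem_product]
    exact ⟨Finset.coe_mem _, Finset.coe_mem _⟩
  case li =>
    intro ij hij
    refine Prod.ext ?_ ?_ <;> simp
  case ri =>
    intro ab _
    refine Prod.ext ?_ ?_ <;>
      · simp only []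
        rw [OrderIso.symm_apply_eq]
  case h =>
    intro ij hij
    simp only [OrderIso.apply_symm_apply]

lemma pfIdx1_val {n : ℕ} (i : Fin n) : (pfIdx1 i).1 = 2 * i.1 := rfl
lemma pfIdx2_val {n : ℕ} (i : Fin n) : (pfIdx2 i).1 = 2 * i.1 + 1 := rfl

section Keys

variable {n t s : ℕ}
  (e₁ : Fin (2 * t) → Fin (2 * n)) (e₂ : Fin (2 * s) → Fin (2 * n))
  (σ : Equiv.Perm (Fin (2 * n))) (σ₁ : Equiv.Perm (Fin (2 * t))) (σ₂ : Equiv.Perm (Fin (2 * s)))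

lemma glue_key1 (hts : t + s = n)
    (hh : ∀ (k : Fin (2 * n)) (h : k.1 < 2 * t), σ k = e₁ (σ₁ ⟨k.1, h⟩))
    (i : Fin n) (j : Fin t) (hij : i.1 = j.1) :
    σ (pfIdx1 i) = e₁ (σ₁ (pfIdx1 j)) ∧ σ (pfIdx2 i) = e₁ (σ₁ (pfIdx2 j)) := by
  have hj2 := j.2
  constructor
  · rw [hh _ (by rw [pfIdx1_val]; omega)]
    exact congrArg e₁ (congrArg (⇑σ₁) (Fin.ext (by simp [pfIdx1_val, hij])))
  · rw [hh _ (by rw [pfIdx2_val]; omega)]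
    exact congrArg e₁ (congrArg (⇑σ₁) (Fin.ext (by simp [pfIdx1_val, pfIdx2_val, hij])))

lemma glue_key2 (hts : t + s = n)
    (ht : ∀ (k : Fin (2 * n)) (h : ¬ k.1 < 2 * t) (h2 : k.1 - 2 * t < 2 * s),
      σ k = e₂ (σ₂ ⟨k.1 - 2 * t, h2⟩))
    (i : Fin n) (j : Fin s) (hij : i.1 = t + j.1) :
    σ (pfIdx1 i) = e₂ (σ₂ (pfIdx1 j)) ∧ σ (pfIdx2 i) = e₂ (σ₂ (pfIdx2 j)) := by
  have hj2 := j.2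
  constructor
  · rw [ht _ (by rw [pfIdx1_val]; omega) (by rw [pfIdx1_val]; omega)]
    exact congrArg e₂ (congrArg (⇑σ₂) (Fin.ext (by simp [pfIdx1_val, hij]; omega)))
  · rw [ht _ (by rw [pfIdx2_val]; omega) (by rw [pfIdx2_val]; omega)]
    exact congrArg e₂ (congrArg (⇑σ₂) (Fin.ext (by simp [pfIdx1_val, pfIdx2_val, hij]; omega)))

lemma pf_cond_glue (hts : t + s = n)
    (h₁ : StrictMono e₁) (h₂ : StrictMono e₂)
    (hh : ∀ (k : Fin (2 * n)) (h : k.1 < 2 * t), σ k = e₁ (σ₁ ⟨k.1, h⟩))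
    (ht : ∀ (k : Fin (2 * n)) (h : ¬ k.1 < 2 * t) (h2 : k.1 - 2 * t < 2 * s),
      σ k = e₂ (σ₂ ⟨k.1 - 2 * t, h2⟩)) :
    (∀ i : Fin n, σ (pfIdx1 i) < σ (pfIdx2 i)) ↔
      ((∀ i : Fin t, σ₁ (pfIdx1 i) < σ₁ (pfIdx2 i)) ∧
       (∀ i : Fin s, σ₂ (pfIdx1 i) < σ₂ (pfIdx2 i))) := by
  constructor
  · intro hσ
    constructor
    · intro i
      have hk := glue_key1 e₁ σ σ₁ hts hh ⟨i.1, by omega⟩ i rfl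
      have hi := hσ ⟨i.1, by omega⟩
      rw [hk.1, hk.2] at hi
      exact h₁.lt_iff_lt.mp hi
    · intro i
      have hk := glue_key2 e₂ σ σ₂ hts ht ⟨t + i.1, by have := i.2; omega⟩ i rfl
      have hi := hσ ⟨t + i.1, by have := i.2; omega⟩
      rw [hk.1, hk.2] at hi
      exact h₂.lt_iff_lt.mp hi
  · rintro ⟨hc1, hc2⟩ i
    by_cases hlt : i.1 < t
    · have hk := glue_key1 e₁ σ σ₁ hts hh i ⟨i.1, hlt⟩ rfl
      rw [hk.1, hk.2]
      exact h₁ (hc1 _)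
    · have hk := glue_key2 e₂ σ σ₂ hts ht i ⟨i.1 - t, by have := i.2; omega⟩
        (show i.1 = t + (i.1 - t) by omega)
      rw [hk.1, hk.2]
      exact h₂ (hc2 _)

end Keys

section Glue

variable {N T S : ℕ}

def glueFun (hTS : T + S = N) (e₁ : Fin T → Fin N) (e₂ : Fin S → Fin N)
    (σ₁ : Equiv.Perm (Fin T)) (σ₂ : Equiv.Perm (Fin S)) : Fin N → Fin N :=
  fun k => if h : k.1 < T then e₁ (σ₁ ⟨k.1, h⟩)
    else e₂ (σ₂ ⟨k.1 - T, by have := k.2; omega⟩)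

lemma glueFun_inj (hTS : T + S = N) {e₁ : Fin T → Fin N} {e₂ : Fin S → Fin N}
    (h1 : Function.Injective e₁) (h2 : Function.Injective e₂)
    (hd : ∀ a b, e₁ a ≠ e₂ b) (σ₁ : Equiv.Perm (Fin T)) (σ₂ : Equiv.Perm (Fin S)) :
    Function.Injective (glueFun hTS e₁ e₂ σ₁ σ₂) := by
  intro k k' hkk
  unfold glueFun at hkk
  split at hkk <;> split at hkk
  · have h := σ₁.injective (h1 hkk)
    rw [Fin.mk.injEq] at h
    exact Fin.ext h
  · exact absurd hkk (hd _ _)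
  · exact absurd hkk.symm (hd _ _)
  · have h := σ₂.injective (h2 hkk)
    rw [Fin.mk.injEq] at h
    apply Fin.ext
    omega

def gluePerm (hTS : T + S = N) (e₁ : Fin T → Fin N) (e₂ : Fin S → Fin N)
    (h1 : Function.Injective e₁) (h2 : Function.Injective e₂)
    (hd : ∀ a b, e₁ a ≠ e₂ b) (σ₁ : Equiv.Perm (Fin T)) (σ₂ : Equiv.Perm (Fin S)) :
    Equiv.Perm (Fin N) :=
  Equiv.ofBijective _ (Finite.injective_iff_bijective.mp (glueFun_inj hTS h1 h2 hd σ₁ σ₂))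

lemma gluePerm_apply_lt (hTS : T + S = N) (e₁ : Fin T → Fin N) (e₂ : Fin S → Fin N)
    (h1 : Function.Injective e₁) (h2 : Function.Injective e₂)
    (hd : ∀ a b, e₁ a ≠ e₂ b) (σ₁ : Equiv.Perm (Fin T)) (σ₂ : Equiv.Perm (Fin S))
    (k : Fin N) (h : k.1 < T) :
    gluePerm hTS e₁ e₂ h1 h2 hd σ₁ σ₂ k = e₁ (σ₁ ⟨k.1, h⟩) := by
  show glueFun hTS e₁ e₂ σ₁ σ₂ k = _
  unfold glueFun
  rw [dif_pos h]

lemma gluePerm_apply_ge (hTS : T + S = N) (e₁ : Fin T → Fin N) (e₂ : Fin S → Fin N)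
    (h1 : Function.Injective e₁) (h2 : Function.Injective e₂)
    (hd : ∀ a b, e₁ a ≠ e₂ b) (σ₁ : Equiv.Perm (Fin T)) (σ₂ : Equiv.Perm (Fin S))
    (k : Fin N) (h : ¬ k.1 < T) (h2' : k.1 - T < S) :
    gluePerm hTS e₁ e₂ h1 h2 hd σ₁ σ₂ k = e₂ (σ₂ ⟨k.1 - T, h2'⟩) := by
  show glueFun hTS e₁ e₂ σ₁ σ₂ k = _
  unfold glueFun
  rw [dif_neg h]

/-- The set `σ({0,…,T-1})`. -/
def headSetOf (hTN : T ≤ N) (σ : Equiv.Perm (Fin N)) : Finset (Fin N) :=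
  Finset.image (fun k : Fin T => σ (Fin.castLE hTN k)) Finset.univ

lemma card_headSetOf (hTN : T ≤ N) (σ : Equiv.Perm (Fin N)) :
    (headSetOf hTN σ).card = T := by
  rw [headSetOf, Finset.card_image_of_injective _
    (fun a b hab => Fin.castLE_injective hTN (σ.injective hab))]
  simp

lemma card_compl_headSetOf (hTS : T + S = N) (hTN : T ≤ N) (σ : Equiv.Perm (Fin N)) :
    (headSetOf hTN σ)ᶜ.card = S := by
  rw [Finset.card_compl, card_headSetOf]
  simp
  omega

def invPerm1 (hTN : T ≤ N) (σ : Equiv.Perm (Fin N)) : Equiv.Perm (Fin T) :=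
  Equiv.ofBijective
    (fun k => ((headSetOf hTN σ).orderIsoOfFin (card_headSetOf hTN σ)).symm
      ⟨σ (Fin.castLE hTN k), Finset.mem_image.mpr ⟨k, Finset.mem_univ _, rfl⟩⟩)
    (Finite.injective_iff_bijective.mp (by
      intro a b hab
      have := congrArg (fun x => (((headSetOf hTN σ).orderIsoOfFin (card_headSetOf hTN σ)) x : Fin N)) hab
      simp only [OrderIso.apply_symm_apply] at this
      exact Fin.castLE_injective hTN (σ.injective this)))

lemma invPerm1_spec (hTN : T ≤ N) (σ : Equiv.Perm (Fin N)) (k : Fin T) :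
    ((headSetOf hTN σ).orderIsoOfFin (card_headSetOf hTN σ) (invPerm1 hTN σ k) : Fin N)
      = σ (Fin.castLE hTN k) := by
  show (((headSetOf hTN σ).orderIsoOfFin (card_headSetOf hTN σ))
    (((headSetOf hTN σ).orderIsoOfFin (card_headSetOf hTN σ)).symm _) : Fin N) = _
  rw [OrderIso.apply_symm_apply]

def invPerm2 (hTS : T + S = N) (hTN : T ≤ N) (σ : Equiv.Perm (Fin N)) : Equiv.Perm (Fin S) :=
  Equiv.ofBijective
    (fun k => ((headSetOf hTN σ)ᶜ.orderIsoOfFin (card_compl_headSetOf hTS hTN σ)).symm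
      ⟨σ ⟨T + k.1, by have := k.2; omega⟩, by
        rw [Finset.mem_compl]
        intro hmem
        obtain ⟨a, _, ha⟩ := Finset.mem_image.mp hmem
        have hv : (Fin.castLE hTN a).1 = T + k.1 := congrArg Fin.val (σ.injective ha)
        have ha2 := a.2
        simp [Fin.castLE] at hv
        omega⟩)
    (Finite.injective_iff_bijective.mp (by
      intro a b hab
      have := congrArg (fun x => ((((headSetOf hTN σ)ᶜ.orderIsoOfFin (card_compl_headSetOf hTS hTN σ)) x : Fin N)) ) hab
      simp only [OrderIso.apply_symm_apply] at this
      have h := σ.injective this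
      rw [Fin.mk.injEq] at h
      apply Fin.ext
      omega))

lemma invPerm2_spec (hTS : T + S = N) (hTN : T ≤ N) (σ : Equiv.Perm (Fin N)) (k : Fin S) :
    (((headSetOf hTN σ)ᶜ.orderIsoOfFin (card_compl_headSetOf hTS hTN σ) (invPerm2 hTS hTN σ k) : Fin N))
      = σ ⟨T + k.1, by have := k.2; omega⟩ := by
  show ((((headSetOf hTN σ)ᶜ.orderIsoOfFin (card_compl_headSetOf hTS hTN σ))
    ((((headSetOf hTN σ)ᶜ.orderIsoOfFin (card_compl_headSetOf hTS hTN σ))).symm _) : Fin N)) = _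
  rw [OrderIso.apply_symm_apply]

lemma invPerm1_glue (hTN : T ≤ N) (σ : Equiv.Perm (Fin N)) (k : Fin N) (h : k.1 < T) :
    σ k = ((headSetOf hTN σ).orderIsoOfFin (card_headSetOf hTN σ)
      (invPerm1 hTN σ ⟨k.1, h⟩) : Fin N) := by
  rw [invPerm1_spec]
  exact congrArg (⇑σ) (Fin.ext rfl).symm

lemma invPerm2_glue (hTS : T + S = N) (hTN : T ≤ N) (σ : Equiv.Perm (Fin N))
    (k : Fin N) (h : ¬ k.1 < T) (h2 : k.1 - T < S) :
    σ k = (((headSetOf hTN σ)ᶜ).orderIsoOfFin (card_compl_headSetOf hTS hTN σ)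
      (invPerm2 hTS hTN σ ⟨k.1 - T, h2⟩) : Fin N) := by
  rw [invPerm2_spec]
  exact congrArg (⇑σ) (Fin.ext (by simp only []; omega)).symm

lemma orderIsoOfFin_congr {α : Type*} [LinearOrder α] {I I' : Finset α} {T : ℕ}
    (hII : I = I') (h : I.card = T) (h' : I'.card = T) (k : Fin T) :
    (I.orderIsoOfFin h k : α) = I'.orderIsoOfFin h' k := by
  subst hII; rfl

lemma image_orderIso {α : Type*} [LinearOrder α] [DecidableEq α] {T : ℕ} (I : Finset α) (h : I.card = T)
    (π : Equiv.Perm (Fin T)) :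
    Finset.image (fun k : Fin T => (I.orderIsoOfFin h (π k) : α)) Finset.univ = I := by
  ext j
  simp only [Finset.mem_image, Finset.mem_univ, true_and]
  constructor
  · rintro ⟨k, rfl⟩; exact Finset.coe_mem _
  · intro hj
    exact ⟨π⁻¹ ((I.orderIsoOfFin h).symm ⟨j, hj⟩), by simp⟩

end Glue

end LaplaceAux

/-- The Laplace-type expansion of the quantum Pfaffian:
`Pf_q(B) = Σ_I inv(I, I^c) Pf_q(B_I) Pf_q(B_{I^c})`, summed over subsets `I`
of cardinality `2t`. -/
theorem pfaffian_laplace_expansion {R : Type*} [Ring R] [Algebra ℂ R]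
    {n : ℕ} (q : Fin (2 * n) → Fin (2 * n) → ℂ)
    (hq0 : ∀ i j, q i j ≠ 0) (hq1 : ∀ i, q i i = 1)
    (hq2 : ∀ i j, q i j * q j i = 1)
    (b : Fin (2 * n) → Fin (2 * n) → R) (t : ℕ) (ht : t ≤ n) :
    Pf q b =
      ∑ I ∈ Finset.powersetCard (2 * t) (Finset.univ : Finset (Fin (2 * n))),
        if h : I.card = 2 * t ∧ Iᶜ.card = 2 * (n - t) then
          invQ q I Iᶜ •
            (PfOn q b (fun k => (I.orderIsoOfFin h.1 k : Fin (2 * n))) *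
             PfOn q b (fun k => (Iᶜ.orderIsoOfFin h.2 k : Fin (2 * n))))
        else 0 := by
  have hts : t + (n - t) = n := by omega
  have hTS : 2 * t + 2 * (n - t) = 2 * n := by omega
  have hTN : 2 * t ≤ 2 * n := by omega
  have cardc : ∀ I : Finset (Fin (2 * n)), I.card = 2 * t → Iᶜ.card = 2 * (n - t) := by
    intro I h
    rw [Finset.card_compl, h, Fintype.card_fin]
    omega
  have strictMono1 : ∀ (m : ℕ) (I : Finset (Fin (2 * n))) (hc : I.card = m),
      StrictMono (fun k : Fin m => (I.orderIsoOfFin hc k : Fin (2 * n))) :=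
    fun m I hc a b' hab => Subtype.coe_lt_coe.mpr ((I.orderIsoOfFin hc).strictMono hab)
  have inj1 : ∀ (m : ℕ) (I : Finset (Fin (2 * n))) (hc : I.card = m),
      Function.Injective (fun k : Fin m => (I.orderIsoOfFin hc k : Fin (2 * n))) :=
    fun m I hc => (strictMono1 m I hc).injective
  have disj : ∀ (I : Finset (Fin (2 * n))) (hc : I.card = 2 * t) (hc' : Iᶜ.card = 2 * (n - t))
      (a : Fin (2 * t)) (c : Fin (2 * (n - t))),
      (fun k : Fin (2 * t) => ((I.orderIsoOfFin hc k : Fin (2 * n)))) a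
        ≠ (fun k : Fin (2 * (n - t)) => ((Iᶜ.orderIsoOfFin hc' k : Fin (2 * n)))) c := by
    intro I hc hc' a c hab
    have h1 : ((I.orderIsoOfFin hc a : Fin (2 * n))) ∈ I := Finset.coe_mem _
    have h2 := Finset.coe_mem (Iᶜ.orderIsoOfFin hc' c)
    rw [Finset.mem_compl] at h2
    simp only [] at hab
    exact h2 (hab ▸ h1)
  -- the big sum with explicit dite summand
  have rhs_eq : (∑ I ∈ Finset.powersetCard (2 * t) (Finset.univ : Finset (Fin (2 * n))),
        if h : I.card = 2 * t ∧ Iᶜ.card = 2 * (n - t) then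
          invQ q I Iᶜ •
            (PfOn q b (fun k => (I.orderIsoOfFin h.1 k : Fin (2 * n))) *
             PfOn q b (fun k => (Iᶜ.orderIsoOfFin h.2 k : Fin (2 * n))))
        else 0)
      = ∑ x ∈ (Finset.powersetCard (2 * t) (Finset.univ : Finset (Fin (2 * n)))) ×ˢ
          ((Finset.univ.filter (fun σ₁ : Equiv.Perm (Fin (2 * t)) =>
              ∀ i : Fin t, σ₁ (pfIdx1 i) < σ₁ (pfIdx2 i))) ×ˢ
           (Finset.univ.filter (fun σ₂ : Equiv.Perm (Fin (2 * (n - t))) =>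
              ∀ i : Fin (n - t), σ₂ (pfIdx1 i) < σ₂ (pfIdx2 i)))),
        if h : x.1.card = 2 * t ∧ x.1ᶜ.card = 2 * (n - t) then
          (invQ q x.1 x.1ᶜ *
            (qSign (fun i j => q ((x.1.orderIsoOfFin h.1 i : Fin (2 * n)))
                ((x.1.orderIsoOfFin h.1 j : Fin (2 * n)))) id x.2.1 *
             qSign (fun i j => q ((x.1ᶜ.orderIsoOfFin h.2 i : Fin (2 * n)))
                ((x.1ᶜ.orderIsoOfFin h.2 j : Fin (2 * n)))) id x.2.2)) •
          (ordProd (fun i : Fin t => b ((x.1.orderIsoOfFin h.1 (x.2.1 (pfIdx1 i)) : Fin (2 * n)))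
              ((x.1.orderIsoOfFin h.1 (x.2.1 (pfIdx2 i)) : Fin (2 * n)))) *
           ordProd (fun i : Fin (n - t) => b ((x.1ᶜ.orderIsoOfFin h.2 (x.2.2 (pfIdx1 i)) : Fin (2 * n)))
              ((x.1ᶜ.orderIsoOfFin h.2 (x.2.2 (pfIdx2 i)) : Fin (2 * n)))))
        else 0 := by
    rw [Finset.sum_product]
    refine Finset.sum_congr rfl (fun I hI => ?_)
    have hc1 : I.card = 2 * t := Finset.mem_powersetCard_univ.mp hI
    have hc2 : Iᶜ.card = 2 * (n - t) := cardc I hc1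
    rw [dif_pos ⟨hc1, hc2⟩]
    have inner : ∀ x2 ∈ (Finset.univ.filter (fun σ₁ : Equiv.Perm (Fin (2 * t)) =>
              ∀ i : Fin t, σ₁ (pfIdx1 i) < σ₁ (pfIdx2 i))) ×ˢ
           (Finset.univ.filter (fun σ₂ : Equiv.Perm (Fin (2 * (n - t))) =>
              ∀ i : Fin (n - t), σ₂ (pfIdx1 i) < σ₂ (pfIdx2 i))),
        (if h : I.card = 2 * t ∧ Iᶜ.card = 2 * (n - t) then
          (invQ q I Iᶜ *
            (qSign (fun i j => q ((I.orderIsoOfFin h.1 i : Fin (2 * n)))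
                ((I.orderIsoOfFin h.1 j : Fin (2 * n)))) id x2.1 *
             qSign (fun i j => q ((Iᶜ.orderIsoOfFin h.2 i : Fin (2 * n)))
                ((Iᶜ.orderIsoOfFin h.2 j : Fin (2 * n)))) id x2.2)) •
          (ordProd (fun i : Fin t => b ((I.orderIsoOfFin h.1 (x2.1 (pfIdx1 i)) : Fin (2 * n)))
              ((I.orderIsoOfFin h.1 (x2.1 (pfIdx2 i)) : Fin (2 * n)))) *
           ordProd (fun i : Fin (n - t) => b ((Iᶜ.orderIsoOfFin h.2 (x2.2 (pfIdx1 i)) : Fin (2 * n)))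
              ((Iᶜ.orderIsoOfFin h.2 (x2.2 (pfIdx2 i)) : Fin (2 * n)))))
        else 0)
        = (invQ q I Iᶜ *
            (qSign (fun i j => q ((I.orderIsoOfFin hc1 i : Fin (2 * n)))
                ((I.orderIsoOfFin hc1 j : Fin (2 * n)))) id x2.1 *
             qSign (fun i j => q ((Iᶜ.orderIsoOfFin hc2 i : Fin (2 * n)))
                ((Iᶜ.orderIsoOfFin hc2 j : Fin (2 * n)))) id x2.2)) •
          (ordProd (fun i : Fin t => b ((I.orderIsoOfFin hc1 (x2.1 (pfIdx1 i)) : Fin (2 * n)))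
              ((I.orderIsoOfFin hc1 (x2.1 (pfIdx2 i)) : Fin (2 * n)))) *
           ordProd (fun i : Fin (n - t) => b ((Iᶜ.orderIsoOfFin hc2 (x2.2 (pfIdx1 i)) : Fin (2 * n)))
              ((Iᶜ.orderIsoOfFin hc2 (x2.2 (pfIdx2 i)) : Fin (2 * n))))) := by
      intro x2 _
      rw [dif_pos ⟨hc1, hc2⟩]
    rw [Finset.sum_congr rfl inner]
    -- now expand PfOn
    simp only [PfOn, Pf]
    rw [Finset.sum_mul_sum, Finset.smul_sum, Finset.sum_product]
    refine Finset.sum_congr rfl (fun σ₁ _ => ?_)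
    rw [Finset.smul_sum]
    refine Finset.sum_congr rfl (fun σ₂ _ => ?_)
    rw [smul_mul_smul_comm, smul_smul]
  rw [rhs_eq]
  -- the inverse-glue identity
  have glue_inv : ∀ σ : Equiv.Perm (Fin (2 * n)),
      gluePerm hTS
        (fun k => ((headSetOf hTN σ).orderIsoOfFin (card_headSetOf hTN σ) k : Fin (2 * n)))
        (fun k => (((headSetOf hTN σ)ᶜ).orderIsoOfFin (card_compl_headSetOf hTS hTN σ) k : Fin (2 * n)))
        (inj1 _ _ _) (inj1 _ _ _)
        (disj _ (card_headSetOf hTN σ) (card_compl_headSetOf hTS hTN σ))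
        (invPerm1 hTN σ) (invPerm2 hTS hTN σ) = σ := by
    intro σ
    apply Equiv.ext
    intro k
    by_cases h : k.1 < 2 * t
    · rw [gluePerm_apply_lt _ _ _ _ _ _ _ _ k h]
      exact (invPerm1_glue hTN σ k h).symm
    · rw [gluePerm_apply_ge _ _ _ _ _ _ _ _ k h (by have := k.2; omega)]
      exact (invPerm2_glue hTS hTN σ k h _).symm
  -- the summand identity
  have summand : ∀ (I : Finset (Fin (2 * n))) (hc1 : I.card = 2 * t)
      (hc2 : Iᶜ.card = 2 * (n - t)) (σ₁ : Equiv.Perm (Fin (2 * t)))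
      (σ₂ : Equiv.Perm (Fin (2 * (n - t)))),
      (invQ q I Iᶜ *
        (qSign (fun i j => q ((I.orderIsoOfFin hc1 i : Fin (2 * n)))
            ((I.orderIsoOfFin hc1 j : Fin (2 * n)))) id σ₁ *
         qSign (fun i j => q ((Iᶜ.orderIsoOfFin hc2 i : Fin (2 * n)))
            ((Iᶜ.orderIsoOfFin hc2 j : Fin (2 * n)))) id σ₂)) •
      (ordProd (fun i : Fin t => b ((I.orderIsoOfFin hc1 (σ₁ (pfIdx1 i)) : Fin (2 * n)))
          ((I.orderIsoOfFin hc1 (σ₁ (pfIdx2 i)) : Fin (2 * n)))) *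
       ordProd (fun i : Fin (n - t) => b ((Iᶜ.orderIsoOfFin hc2 (σ₂ (pfIdx1 i)) : Fin (2 * n)))
          ((Iᶜ.orderIsoOfFin hc2 (σ₂ (pfIdx2 i)) : Fin (2 * n)))))
      = qSign q id (gluePerm hTS
            (fun k => (I.orderIsoOfFin hc1 k : Fin (2 * n)))
            (fun k => (Iᶜ.orderIsoOfFin hc2 k : Fin (2 * n)))
            (inj1 _ _ _) (inj1 _ _ _) (disj I hc1 hc2) σ₁ σ₂) •
          ordProd (fun i : Fin n =>
            b ((gluePerm hTS
            (fun k => (I.orderIsoOfFin hc1 k : Fin (2 * n)))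
            (fun k => (Iᶜ.orderIsoOfFin hc2 k : Fin (2 * n)))
            (inj1 _ _ _) (inj1 _ _ _) (disj I hc1 hc2) σ₁ σ₂) (pfIdx1 i))
              ((gluePerm hTS
            (fun k => (I.orderIsoOfFin hc1 k : Fin (2 * n)))
            (fun k => (Iᶜ.orderIsoOfFin hc2 k : Fin (2 * n)))
            (inj1 _ _ _) (inj1 _ _ _) (disj I hc1 hc2) σ₁ σ₂) (pfIdx2 i))) := by
    intro I hc1 hc2 σ₁ σ₂
    set g := gluePerm hTS
            (fun k => (I.orderIsoOfFin hc1 k : Fin (2 * n)))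
            (fun k => (Iᶜ.orderIsoOfFin hc2 k : Fin (2 * n)))
            (inj1 _ _ _) (inj1 _ _ _) (disj I hc1 hc2) σ₁ σ₂ with hg
    have hh : ∀ (k : Fin (2 * n)) (h : k.1 < 2 * t),
        g k = ((I.orderIsoOfFin hc1 (σ₁ ⟨k.1, h⟩) : Fin (2 * n))) :=
      fun k h => gluePerm_apply_lt _ _ _ _ _ _ _ _ k h
    have hta : ∀ (k : Fin (2 * n)) (h : ¬ k.1 < 2 * t) (h2 : k.1 - 2 * t < 2 * (n - t)),
        g k = ((Iᶜ.orderIsoOfFin hc2 (σ₂ ⟨k.1 - 2 * t, h2⟩) : Fin (2 * n))) :=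
      fun k h h2 => gluePerm_apply_ge _ _ _ _ _ _ _ _ k h h2
    rw [qSign_glue hTS q _ _ (strictMono1 _ I hc1) (strictMono1 _ Iᶜ hc2) g σ₁ σ₂ hh hta]
    rw [← invQ_eq q I hc1 hc2]
    rw [ordProd_split hts (fun i : Fin n => b (g (pfIdx1 i)) (g (pfIdx2 i)))]
    congr 1
    congr 1
    · refine congrArg ordProd (funext fun i => ?_)
      obtain ⟨c1, c2⟩ := glue_key1 (fun k => (I.orderIsoOfFin hc1 k : Fin (2 * n))) g σ₁
        hts hh (⟨i.1, by omega⟩ : Fin n) i rfl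
      rw [c1, c2]
    · refine congrArg ordProd (funext fun i => ?_)
      obtain ⟨c1, c2⟩ := glue_key2 (fun k => (Iᶜ.orderIsoOfFin hc2 k : Fin (2 * n))) g σ₂
        hts hta (⟨t + i.1, by have := i.2; omega⟩ : Fin n) i rfl
      rw [c1, c2]
  -- now the bijection
  rw [Pf]
  refine Finset.sum_bij'
    (fun σ _ => ((headSetOf hTN σ : Finset (Fin (2 * n))),
      (invPerm1 hTN σ, invPerm2 hTS hTN σ)))
    (fun x hx => gluePerm hTS
      (fun k => (x.1.orderIsoOfFin
        (Finset.mem_powersetCard_univ.mp (Finset.mem_product.mp hx).1) k : Fin (2 * n)))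
      (fun k => (x.1ᶜ.orderIsoOfFin
        (cardc x.1 (Finset.mem_powersetCard_univ.mp (Finset.mem_product.mp hx).1)) k : Fin (2 * n)))
      (inj1 _ _ _) (inj1 _ _ _)
      (disj x.1 _ _) x.2.1 x.2.2)
    ?hi ?hj ?li ?ri ?hsum
  case hi =>
    intro σ hσ
    have hcond := (Finset.mem_filter.mp hσ).2
    rw [Finset.mem_product]
    refine ⟨Finset.mem_powersetCard_univ.mpr (card_headSetOf hTN σ), ?_⟩
    rw [Finset.mem_product]
    have hsplit := (pf_cond_glue
      (fun k => ((headSetOf hTN σ).orderIsoOfFin (card_headSetOf hTN σ) k : Fin (2 * n)))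
      (fun k => (((headSetOf hTN σ)ᶜ).orderIsoOfFin (card_compl_headSetOf hTS hTN σ) k : Fin (2 * n)))
      σ (invPerm1 hTN σ) (invPerm2 hTS hTN σ) hts
      (strictMono1 _ _ _) (strictMono1 _ _ _)
      (fun k h => invPerm1_glue hTN σ k h)
      (fun k h h2 => invPerm2_glue hTS hTN σ k h h2)).mp hcond
    exact ⟨Finset.mem_filter.mpr ⟨Finset.mem_univ _, hsplit.1⟩,
      Finset.mem_filter.mpr ⟨Finset.mem_univ _, hsplit.2⟩⟩
  case hj =>
    intro x hx
    have hx1 := (Finset.mem_product.mp hx).1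
    have hx2 := (Finset.mem_product.mp hx).2
    have hc1 := Finset.mem_powersetCard_univ.mp hx1
    have hcond1 := (Finset.mem_filter.mp (Finset.mem_product.mp hx2).1).2
    have hcond2 := (Finset.mem_filter.mp (Finset.mem_product.mp hx2).2).2
    rw [Finset.mem_filter]
    refine ⟨Finset.mem_univ _, ?_⟩
    exact (pf_cond_glue
      (fun k => (x.1.orderIsoOfFin (Finset.mem_powersetCard_univ.mp (Finset.mem_product.mp hx).1) k : Fin (2 * n)))
      (fun k => (x.1ᶜ.orderIsoOfFin (cardc x.1 (Finset.mem_powersetCard_univ.mp (Finset.mem_product.mp hx).1)) k : Fin (2 * n)))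
      _ x.2.1 x.2.2 hts
      (strictMono1 _ _ _) (strictMono1 _ _ _)
      (fun k h => gluePerm_apply_lt _ _ _ _ _ _ _ _ k h)
      (fun k h h2 => gluePerm_apply_ge _ _ _ _ _ _ _ _ k h h2)).mpr ⟨hcond1, hcond2⟩
  case li =>
    intro σ hσ
    exact glue_inv σ
  case ri =>
    intro x hx
    have hc1 := Finset.mem_powersetCard_univ.mp (Finset.mem_product.mp hx).1
    set g := gluePerm hTS
      (fun k => (x.1.orderIsoOfFin
        (Finset.mem_powersetCard_univ.mp (Finset.mem_product.mp hx).1) k : Fin (2 * n)))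
      (fun k => (x.1ᶜ.orderIsoOfFin
        (cardc x.1 (Finset.mem_powersetCard_univ.mp (Finset.mem_product.mp hx).1)) k : Fin (2 * n)))
      (inj1 _ _ _) (inj1 _ _ _)
      (disj x.1 _ _) x.2.1 x.2.2 with hg
    have hhead : headSetOf hTN g = x.1 := by
      rw [headSetOf]
      have hfun : (fun k : Fin (2 * t) => g (Fin.castLE hTN k))
          = fun k : Fin (2 * t) => (x.1.orderIsoOfFin hc1 (x.2.1 k) : Fin (2 * n)) := by
        funext k
        rw [hg, gluePerm_apply_lt _ _ _ _ _ _ _ _ (Fin.castLE hTN k) k.2]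
        exact congrArg _ (congrArg _ (Fin.ext rfl))
      rw [hfun]
      exact image_orderIso x.1 hc1 x.2.1
    have hheadc : (headSetOf hTN g)ᶜ = x.1ᶜ := by rw [hhead]
    refine Prod.ext ?_ (Prod.ext ?_ ?_)
    · exact hhead
    · apply Equiv.ext
      intro k
      apply inj1 _ x.1 hc1
      show (x.1.orderIsoOfFin hc1 (invPerm1 hTN g k) : Fin (2 * n)) = _
      rw [← orderIsoOfFin_congr hhead (card_headSetOf hTN g) hc1]
      rw [invPerm1_spec]
      rw [hg, gluePerm_apply_lt _ _ _ _ _ _ _ _ (Fin.castLE hTN k) k.2]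
      exact congrArg _ (congrArg _ (Fin.ext rfl))
    · apply Equiv.ext
      intro k
      apply inj1 _ x.1ᶜ (cardc x.1 hc1)
      show (x.1ᶜ.orderIsoOfFin (cardc x.1 hc1) (invPerm2 hTS hTN g k) : Fin (2 * n)) = _
      rw [← orderIsoOfFin_congr hheadc (card_compl_headSetOf hTS hTN g) (cardc x.1 hc1)]
      rw [invPerm2_spec]
      rw [hg, gluePerm_apply_ge _ _ _ _ _ _ _ _ _ (by simp) (by simp)]
      exact congrArg _ (congrArg _ (Fin.ext (by simp)))
  case hsum =>
    intro σ hσ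
    rw [dif_pos (⟨card_headSetOf hTN σ, card_compl_headSetOf hTS hTN σ⟩ :
      (headSetOf hTN σ).card = 2 * t ∧ ((headSetOf hTN σ)ᶜ).card = 2 * (n - t))]
    rw [summand _ (card_headSetOf hTN σ) (card_compl_headSetOf hTS hTN σ)
      (invPerm1 hTN σ) (invPerm2 hTS hTN σ)]
    rw [glue_inv σ]
end
end

section
/- Let A = (a_{ij}) be a 2n×2n multiparameter quantum matrix over R with the (p,λ)-condition, and let B = (b_{ij}) be a 2n×2n array of elements of R with b_{ii} = 0 for all i and b_{ji} = −p_{ij} b_{ij} for all i < j, such that every entry of B commutes with every entry of A. Let C = AᵀBA, i.e., c_{ij} = Σ_{k,l} a_{ki} b_{kl} a_{lj}. Then: (1) c_{ii} = 0 for all i; (2) c_{ji} = −p_{ij} c_{ij} for all i < j; and (3) for i < j, c_{ij} = Σ_{k<l} det_q(A^{kl}_{ij}) · b_{kl}. -/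
open Finset

noncomputable section

attribute [local instance] Classical.propDecidable

/-- For a `p`-antisymmetric `B` commuting with the quantum matrix
`A`, the matrix `C = AᵀBA` is again `p`-antisymmetric and its entries are
expressed through the `2×2` quantum minors of `A`. -/
theorem transformed_antisymmetric {R : Type*} [Ring R] [Algebra ℂ R]
    {n : ℕ} (lam : ℂ)
    (p q : Fin (2 * n) → Fin (2 * n) → ℂ)
    (hpq : ParamConds p q) (hpl : PLambdaCond p q lam)
    (a : Fin (2 * n) → Fin (2 * n) → R) (ha : IsQuantumMatrix p q a)
    (b : Fin (2 * n) → Fin (2 * n) → R)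
    (hb0 : ∀ i, b i i = 0)
    (hbskew : ∀ i j : Fin (2 * n), i < j → b j i = -(p i j) • b i j)
    (hcomm : ∀ i j k l, Commute (b i j) (a k l))
    (c : Fin (2 * n) → Fin (2 * n) → R)
    (hc : ∀ i j, c i j = ∑ k, ∑ l, a k i * b k l * a l j) :
    (∀ i, c i i = 0) ∧
    (∀ i j : Fin (2 * n), i < j → c j i = -(p i j) • c i j) ∧
    (∀ i j : Fin (2 * n), i < j →
      c i j =
        ∑ kl ∈ Finset.univ.filter
            (fun kl : Fin (2 * n) × Fin (2 * n) => kl.1 < kl.2),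
          (a kl.1 i * a kl.2 j - p kl.1 kl.2 • (a kl.2 i * a kl.1 j)) *
            b kl.1 kl.2) := by

  classical
  -- Reduce the double sum to a sum over ordered pairs
  have key : ∀ i j : Fin (2 * n), c i j =
      ∑ kl ∈ Finset.univ.filter
          (fun kl : Fin (2 * n) × Fin (2 * n) => kl.1 < kl.2),
        (a kl.1 i * a kl.2 j - p kl.1 kl.2 • (a kl.2 i * a kl.1 j)) *
          b kl.1 kl.2 := by
    intro i j
    rw [hc]
    have h1 : (∑ k, ∑ l, a k i * b k l * a l j)
        = ∑ kl : Fin (2 * n) × Fin (2 * n), a kl.1 i * b kl.1 kl.2 * a kl.2 j :=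
      (Fintype.sum_prod_type (f := fun kl : Fin (2*n) × Fin (2*n) =>
        a kl.1 i * b kl.1 kl.2 * a kl.2 j)).symm
    rw [h1]
    set g : Fin (2 * n) × Fin (2 * n) → R :=
      fun kl => a kl.1 i * b kl.1 kl.2 * a kl.2 j with hg
    rw [← Finset.sum_filter_add_sum_filter_not Finset.univ
      (fun kl : Fin (2 * n) × Fin (2 * n) => kl.1 < kl.2) g]
    rw [← Finset.sum_filter_add_sum_filter_not
      (Finset.univ.filter (fun kl : Fin (2 * n) × Fin (2 * n) => ¬ kl.1 < kl.2))
      (fun kl : Fin (2 * n) × Fin (2 * n) => kl.2 < kl.1) g]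
    have hdiag : ∑ kl ∈ (Finset.univ.filter
          (fun kl : Fin (2 * n) × Fin (2 * n) => ¬ kl.1 < kl.2)).filter
          (fun kl => ¬ kl.2 < kl.1), g kl = 0 := by
      apply Finset.sum_eq_zero
      intro kl hkl
      simp only [Finset.mem_filter, Finset.mem_univ, true_and] at hkl
      have heq : kl.1 = kl.2 := le_antisymm (le_of_not_gt hkl.2) (le_of_not_gt hkl.1)
      simp [hg, heq, hb0]
    have hgt : ∑ kl ∈ (Finset.univ.filter
          (fun kl : Fin (2 * n) × Fin (2 * n) => ¬ kl.1 < kl.2)).filter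
          (fun kl => kl.2 < kl.1), g kl
        = ∑ kl ∈ Finset.univ.filter
            (fun kl : Fin (2 * n) × Fin (2 * n) => kl.1 < kl.2), g kl.swap := by
      apply Finset.sum_nbij' (i := fun kl => Prod.swap kl) (j := fun kl => Prod.swap kl)
      · intro kl hkl
        simp only [Finset.mem_filter, Finset.mem_univ, true_and] at hkl ⊢
        exact hkl.2
      · intro kl hkl
        simp only [Finset.mem_filter, Finset.mem_univ, true_and] at hkl ⊢
        exact ⟨not_lt_of_gt hkl, hkl⟩
      · intro kl _; simp
      · intro kl _; simp
      · intro kl _; simp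
    rw [hdiag, hgt, add_zero, ← Finset.sum_add_distrib]
    apply Finset.sum_congr rfl
    intro kl hkl
    simp only [Finset.mem_filter, Finset.mem_univ, true_and] at hkl
    obtain ⟨k, l⟩ := kl
    simp only [hg, Prod.swap] at *
    -- g (k,l) + g (l,k) = (a k i * a l j - p k l • (a l i * a k j)) * b k l
    rw [hbskew k l hkl]
    have c1 : a k i * b k l * a l j = (a k i * a l j) * b k l := by
      rw [mul_assoc, mul_assoc, (hcomm k l l j).eq]
    have c2 : a l i * b k l * a k j = (a l i * a k j) * b k l := by
      rw [mul_assoc, mul_assoc, (hcomm k l k j).eq]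
    rw [mul_smul_comm, smul_mul_assoc, c1, c2, sub_mul, neg_smul, smul_mul_assoc]
    abel
  have hterm : ∀ (i j k l : Fin (2 * n)), i < j → k < l →
      a k j * a l i - p k l • (a l j * a k i)
        = -(p i j) • (a k i * a l j - p k l • (a l i * a k j)) := by
    intro i j k l hij hkl
    have E := ha.2.2.2 k l i j hkl hij
    have hp0 : p i j ≠ 0 := (hpq.1 i j).1
    have E' := congrArg (fun x => (p i j) • x) E
    simp only [smul_sub, smul_smul] at E'
    have h1 : p i j * (p k l / p i j) = p k l := by field_simp
    have h2 : p i j * (p i j)⁻¹ = 1 := mul_inv_cancel₀ hp0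
    rw [h1, h2, one_smul] at E'
    linear_combination (norm := module) E'
  refine ⟨?_, ?_, ?_⟩
  · intro i
    rw [key]
    apply Finset.sum_eq_zero
    intro kl hkl
    simp only [Finset.mem_filter, Finset.mem_univ, true_and] at hkl
    have := ha.2.1 kl.1 kl.2 i hkl
    rw [this, sub_self, zero_mul]
  · intro i j hij
    rw [key, key, Finset.smul_sum]
    apply Finset.sum_congr rfl
    intro kl hkl
    simp only [Finset.mem_filter, Finset.mem_univ, true_and] at hkl
    rw [hterm i j kl.1 kl.2 hij hkl, smul_mul_assoc]
  · intro i j _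
    exact key i j
end
end
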